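/- arXiv:1207.6894 — 9 statements merged into one kernel-verified Lean document; each statement's English description precedes it below -/
import Mathlib

section
/- Let M ⊆ ℝ^n be a nonempty closed convex set and q ∈ ℝ^n with q ∉ M. Let K ⊆ ℝ^n be a compact convex set containing 0, let a ≥ 0 and w ∈ ℝ^n with w ∈ a·K, and let δ > 0 and p > 1. Then the set D = { λ ∈ [0, ∞) : (λ·(M − q)) ∩ ((a^p + λδ)^{1/p}·K − w) ≠ ∅ } contains 0 and is a compact subset of [0, ∞); in particular D has a greatest element. -/
open Pointwise

/-- The set `D` of nonnegative `λ` for which `λ·(M − q)` meets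
`(a^p + λδ)^{1/p}·K − w`. -/
def resolvingSet (n : ℕ) (M K : Set (EuclideanSpace ℝ (Fin n)))
    (q w : EuclideanSpace ℝ (Fin n)) (a δ p : ℝ) : Set ℝ :=
  {lam : ℝ | 0 ≤ lam ∧
    ((lam • ((· - q) '' M)) ∩
      ((· - w) '' (((a ^ p + lam * δ) ^ (1 / p)) • K))).Nonempty}

lemma mem_resolvingSet_iff {n : ℕ} {M K : Set (EuclideanSpace ℝ (Fin n))}
    {q w : EuclideanSpace ℝ (Fin n)} {a δ p lam : ℝ} :
    lam ∈ resolvingSet n M K q w a δ p ↔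
      0 ≤ lam ∧ ∃ m ∈ M, ∃ κ ∈ K,
        lam • (m - q) = ((a ^ p + lam * δ) ^ (1 / p)) • κ - w := by
  simp only [resolvingSet, Set.mem_setOf_eq, Set.Nonempty, Set.mem_inter_iff,
    Set.mem_smul_set, Set.mem_image]
  constructor
  · rintro ⟨h0, y, ⟨z, ⟨m, hm, rfl⟩, rfl⟩, ⟨z', ⟨κ, hκ, rfl⟩, he⟩⟩
    exact ⟨h0, m, hm, κ, hκ, he.symm⟩
  · rintro ⟨h0, m, hm, κ, hκ, he⟩
    exact ⟨h0, lam • (m - q), ⟨m - q, ⟨m, hm, rfl⟩, rfl⟩, ⟨_, ⟨κ, hκ, rfl⟩, he.symm⟩⟩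

lemma real_rpow_add_le {x y s : ℝ} (hx : 0 ≤ x) (hy : 0 ≤ y) (h0 : 0 ≤ s) (h1 : s ≤ 1) :
    (x + y) ^ s ≤ x ^ s + y ^ s := by
  have h := NNReal.rpow_add_le_add_rpow x.toNNReal y.toNNReal h0 h1
  rw [← Real.toNNReal_add hx hy] at h
  have h2 := NNReal.coe_le_coe.2 h
  simpa [NNReal.coe_rpow, Real.coe_toNNReal _ hx, Real.coe_toNNReal _ hy,
    Real.coe_toNNReal _ (add_nonneg hx hy)] using h2
theorem stmt_1 (n : ℕ) (M : Set (EuclideanSpace ℝ (Fin n)))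
    (hMne : M.Nonempty) (hMcl : IsClosed M) (hMcv : Convex ℝ M)
    (q : EuclideanSpace ℝ (Fin n)) (hq : q ∉ M)
    (K : Set (EuclideanSpace ℝ (Fin n))) (hKcp : IsCompact K) (hKcv : Convex ℝ K)
    (hK0 : (0 : EuclideanSpace ℝ (Fin n)) ∈ K)
    (a : ℝ) (ha : 0 ≤ a) (w : EuclideanSpace ℝ (Fin n)) (hw : w ∈ a • K)
    (δ : ℝ) (hδ : 0 < δ) (p : ℝ) (hp : 1 < p) :
    (0 : ℝ) ∈ resolvingSet n M K q w a δ p ∧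
    IsCompact (resolvingSet n M K q w a δ p) ∧
    resolvingSet n M K q w a δ p ⊆ Set.Ici 0 ∧
    ∃ lam₀ ∈ resolvingSet n M K q w a δ p,
      ∀ lam ∈ resolvingSet n M K q w a δ p, lam ≤ lam₀ := by
  have hp0 : (0:ℝ) < p := lt_trans one_pos hp
  have hp0' : p ≠ 0 := hp0.ne'
  have h1p : (0:ℝ) < 1 / p := by positivity
  have h1p1 : (1:ℝ) / p < 1 := (div_lt_one hp0).2 hp
  -- 0 ∈ D
  have h0mem : (0:ℝ) ∈ resolvingSet n M K q w a δ p := by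
    rw [mem_resolvingSet_iff]
    obtain ⟨m, hm⟩ := hMne
    obtain ⟨k, hk, hak⟩ := Set.mem_smul_set.mp hw
    refine ⟨le_refl 0, m, hm, k, hk, ?_⟩
    have hap : (a ^ p + 0 * δ) ^ (1 / p) = a := by
      rw [zero_mul, add_zero, ← Real.rpow_mul ha, mul_one_div, div_self hp0', Real.rpow_one]
    rw [zero_smul, hap, hak, sub_self]
  -- subset of Ici 0
  have hsub : resolvingSet n M K q w a δ p ⊆ Set.Ici 0 := fun lam h => h.1
  -- separation
  obtain ⟨f, u, hfM, hfq⟩ := geometric_hahn_banach_closed_point hMcv hMcl hq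
  set ε : ℝ := f q - u with hε
  have hε0 : 0 < ε := sub_pos.2 hfq
  -- bound on K
  obtain ⟨R, hR0, hR⟩ := hKcp.isBounded.exists_pos_norm_le
  -- key inequality
  have key : ∀ lam ∈ resolvingSet n M K q w a δ p,
      lam * ε ≤ (a ^ p + lam * δ) ^ (1 / p) * (‖f‖ * R) + ‖f‖ * ‖w‖ := by
    intro lam hlam
    obtain ⟨h0, m, hm, κ, hκ, heq⟩ := mem_resolvingSet_iff.mp hlam
    set c : ℝ := (a ^ p + lam * δ) ^ (1 / p) with hc
    have hc0 : 0 ≤ c := Real.rpow_nonneg (by positivity) _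
    have hfe : lam * (f m - f q) = c * f κ - f w := by
      have := congrArg f heq
      simpa [map_smul, map_sub, smul_eq_mul] using this
    have h1 : lam * ε ≤ lam * (f q - f m) := by
      have := hfM m hm
      nlinarith
    have h2 : f w ≤ ‖f‖ * ‖w‖ := le_trans (le_abs_self _) (by
      simpa [Real.norm_eq_abs] using f.le_opNorm w)
    have h3 : -(f κ) ≤ ‖f‖ * R := by
      have h4 : |f κ| ≤ ‖f‖ * ‖κ‖ := by simpa [Real.norm_eq_abs] using f.le_opNorm κ
      have h5 : ‖f‖ * ‖κ‖ ≤ ‖f‖ * R :=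
        mul_le_mul_of_nonneg_left (hR κ hκ) (norm_nonneg f)
      nlinarith [neg_abs_le (f κ)]
    nlinarith [mul_le_mul_of_nonneg_left h3 hc0]
  -- explicit bound
  set C' : ℝ := δ ^ (1/p) * (‖f‖ * R) with hC'
  set B' : ℝ := a * (‖f‖ * R) + ‖f‖ * ‖w‖ with hB'
  have hC'0 : 0 ≤ C' := by positivity
  have hB'0 : 0 ≤ B' := by positivity
  set s : ℝ := (p - 1) / p with hs
  have hs0 : 0 < s := by
    apply div_pos <;> linarith
  set N : ℝ := max 1 (((C' + B') / ε) ^ s⁻¹) with hN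
  have hIcc : resolvingSet n M K q w a δ p ⊆ Set.Icc 0 N := by
    intro lam hlam
    have h0 : 0 ≤ lam := hlam.1
    refine ⟨h0, ?_⟩
    rcases le_or_gt lam 1 with h1 | h1
    · exact le_trans h1 (le_max_left _ _)
    -- lam > 1
    have hkey := key lam hlam
    have hsplit : (a ^ p + lam * δ) ^ (1/p) ≤ a + lam ^ (1/p) * δ ^ (1/p) := by
      have := real_rpow_add_le (x := a ^ p) (y := lam * δ)
        (by positivity) (by positivity) h1p.le h1p1.le
      have hxa : (a ^ p) ^ (1/p) = a := by
        rw [← Real.rpow_mul ha, mul_one_div, div_self hp0', Real.rpow_one]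
      have hxl : (lam * δ) ^ (1/p) = lam ^ (1/p) * δ ^ (1/p) :=
        Real.mul_rpow h0 hδ.le
      rw [hxa, hxl] at this
      exact this
    have hrp0 : 0 < lam ^ (1/p) := Real.rpow_pos_of_pos (by linarith) _
    have hrp1 : 1 ≤ lam ^ (1/p) := Real.one_le_rpow h1.le h1p.le
    have hbig : lam * ε ≤ lam ^ (1/p) * (C' + B') := by
      have hfR : 0 ≤ ‖f‖ * R := by positivity
      have := mul_le_mul_of_nonneg_right hsplit hfR
      nlinarith
    have hlampos : (0:ℝ) < lam := by linarith
    have hsum : 1 / p + s = 1 := by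
      rw [hs]; field_simp; ring
    have hmul : lam ^ (1/p) * lam ^ s = lam := by
      rw [← Real.rpow_add hlampos, hsum, Real.rpow_one]
    have hss : lam ^ s * ε ≤ C' + B' := by
      have h' : lam ^ (1/p) * (lam ^ s * ε) ≤ lam ^ (1/p) * (C' + B') := by
        calc lam ^ (1/p) * (lam ^ s * ε) = lam * ε := by rw [← mul_assoc, hmul]
        _ ≤ _ := hbig
      exact le_of_mul_le_mul_left h' hrp0
    have hls : lam ^ s ≤ (C' + B') / ε := by
      rw [le_div_iff₀ hε0]
      exact hss
    have : lam ≤ ((C' + B') / ε) ^ s⁻¹ := by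
      have h2 := Real.rpow_le_rpow (Real.rpow_nonneg h0 s) hls (inv_nonneg.2 hs0.le)
      rwa [Real.rpow_rpow_inv h0 hs0.ne'] at h2
    exact le_trans this (le_max_right _ _)
  -- closedness
  have hclosed : IsClosed (resolvingSet n M K q w a δ p) := by
    refine IsSeqClosed.isClosed ?_
    intro x lam hx hlim
    have hlam0 : 0 ≤ lam := ge_of_tendsto' hlim (fun k => (hx k).1)
    rcases eq_or_lt_of_le hlam0 with heq | hpos
    · rw [← heq]; exact h0mem
    · have hxk := fun k => (mem_resolvingSet_iff.mp (hx k)).2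
      choose m hmM κ hκK heqk using hxk
      obtain ⟨kk, hkkK, φ, hφ, hκtend⟩ := hKcp.tendsto_subseq hκK
      have hxφ : Filter.Tendsto (fun k => x (φ k)) Filter.atTop (nhds lam) :=
        hlim.comp hφ.tendsto_atTop
      have hbase : Filter.Tendsto (fun k => a ^ p + x (φ k) * δ) Filter.atTop
          (nhds (a ^ p + lam * δ)) :=
        tendsto_const_nhds.add (hxφ.mul_const δ)
      have hc_cont : Filter.Tendsto (fun k => (a ^ p + x (φ k) * δ) ^ (1/p)) Filter.atTop
          (nhds ((a ^ p + lam * δ) ^ (1/p))) :=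
        (Real.continuousAt_rpow_const _ _ (Or.inr h1p.le)).tendsto.comp hbase
      set y : EuclideanSpace ℝ (Fin n) := ((a ^ p + lam * δ) ^ (1/p)) • kk - w with hy
      have hytend : Filter.Tendsto
          (fun k => ((a ^ p + x (φ k) * δ) ^ (1/p)) • κ (φ k) - w) Filter.atTop (nhds y) :=
        (hc_cont.smul hκtend).sub_const w
      have hmtend : Filter.Tendsto
          (fun k => q + (x (φ k))⁻¹ • (((a ^ p + x (φ k) * δ) ^ (1/p)) • κ (φ k) - w))
          Filter.atTop (nhds (q + lam⁻¹ • y)) :=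
        tendsto_const_nhds.add ((hxφ.inv₀ hpos.ne').smul hytend)
      have hev : ∀ᶠ k in Filter.atTop,
          q + (x (φ k))⁻¹ • (((a ^ p + x (φ k) * δ) ^ (1/p)) • κ (φ k) - w) ∈ M := by
        filter_upwards [hxφ.eventually (eventually_gt_nhds hpos)] with k hk
        rw [← heqk (φ k), inv_smul_smul₀ hk.ne', add_sub_cancel]
        exact hmM (φ k)
      have hmemM : q + lam⁻¹ • y ∈ M := hMcl.mem_of_tendsto hmtend hev
      rw [mem_resolvingSet_iff]
      refine ⟨hlam0, q + lam⁻¹ • y, hmemM, kk, hkkK, ?_⟩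
      rw [add_sub_cancel_left, smul_inv_smul₀ hpos.ne']
  -- assemble
  have hcompact : IsCompact (resolvingSet n M K q w a δ p) :=
    (isCompact_Icc (a := (0:ℝ)) (b := N)).of_isClosed_subset hclosed hIcc
  obtain ⟨lam₀, hlam₀mem, hlam₀ub⟩ := hcompact.exists_isGreatest ⟨0, h0mem⟩
  exact ⟨h0mem, hcompact, hsub, lam₀, hlam₀mem, fun lam hlam => hlam₀ub hlam⟩
end

section
/- Let ξ, v ∈ ℝ^n with ξ ≠ 0, and let a ≥ 0 and e ≥ 0 be reals. Then { λ ∈ [0, ∞) : ‖a·v − λ·ξ‖ ≤ (a²‖v‖² + λe)^{1/2} } = [0, max{0, (e + 2a⟨v, ξ⟩)/‖ξ‖²}]. -/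
theorem stmt_5 (n : ℕ) (ξ v : EuclideanSpace ℝ (Fin n)) (hξ : ξ ≠ 0)
    (a e : ℝ) (ha : 0 ≤ a) (he : 0 ≤ e) :
    {lam : ℝ | 0 ≤ lam ∧
        ‖a • v - lam • ξ‖ ≤ Real.sqrt (a ^ 2 * ‖v‖ ^ 2 + lam * e)} =
      Set.Icc 0 (max 0 ((e + 2 * a * (inner ℝ v ξ : ℝ)) / ‖ξ‖ ^ 2)) := by
  have hK : (0:ℝ) < ‖ξ‖ ^ 2 := pow_pos (norm_pos_iff.mpr hξ) 2
  set K := ‖ξ‖ ^ 2 with hKdef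
  set M := e + 2 * a * (inner ℝ v ξ : ℝ) with hMdef
  ext lam
  simp only [Set.mem_setOf_eq, Set.mem_Icc]
  have hexp : ‖a • v - lam • ξ‖ ^ 2
      = a ^ 2 * ‖v‖ ^ 2 - 2 * (a * lam) * (inner ℝ v ξ : ℝ) + lam ^ 2 * K := by
    rw [hKdef, norm_sub_sq_real]
    simp [inner_smul_left, inner_smul_right, norm_smul, mul_pow]
    ring
  constructor
  · rintro ⟨hlam, hle⟩
    refine ⟨hlam, ?_⟩
    have hsq : ‖a • v - lam • ξ‖ ^ 2 ≤ a ^ 2 * ‖v‖ ^ 2 + lam * e := by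
      have := Real.sqrt_le_sqrt (le_of_eq (Real.sqrt_sq (norm_nonneg (a • v - lam • ξ))).symm)
      calc ‖a • v - lam • ξ‖ ^ 2 ≤ Real.sqrt (a ^ 2 * ‖v‖ ^ 2 + lam * e) ^ 2 := by
            apply pow_le_pow_left₀ (norm_nonneg _) hle
        _ ≤ a ^ 2 * ‖v‖ ^ 2 + lam * e := by
            rw [Real.sq_sqrt (by positivity)]
    rw [hexp] at hsq
    have hkey : lam * (lam * K - M) ≤ 0 := by rw [hMdef]; nlinarith
    rcases eq_or_lt_of_le hlam with h0 | h0
    · simp [← h0]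
    · have : lam * K ≤ M := by nlinarith
      exact le_max_of_le_right ((le_div_iff₀ hK).mpr this)
  · rintro ⟨hlam, hle⟩
    refine ⟨hlam, ?_⟩
    have hkey : lam * (lam * K - M) ≤ 0 := by
      rcases le_or_gt M 0 with hM | hM
      · have : lam = 0 := le_antisymm (by
          have : max 0 (M / K) = 0 := max_eq_left (div_nonpos_of_nonpos_of_nonneg hM hK.le)
          rwa [this] at hle) hlam
        simp [this]
      · have h1 : lam ≤ M / K := le_trans hle (max_le (by positivity) le_rfl)
        have h2 : lam * K ≤ M := (le_div_iff₀ hK).mp h1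
        exact mul_nonpos_of_nonneg_of_nonpos hlam (by linarith)
    have hsq : ‖a • v - lam • ξ‖ ^ 2 ≤ a ^ 2 * ‖v‖ ^ 2 + lam * e := by
      rw [hexp, hMdef] at *; nlinarith
    calc ‖a • v - lam • ξ‖ = Real.sqrt (‖a • v - lam • ξ‖ ^ 2) :=
          (Real.sqrt_sq (norm_nonneg _)).symm
      _ ≤ Real.sqrt (a ^ 2 * ‖v‖ ^ 2 + lam * e) := Real.sqrt_le_sqrt hsq
end

section
/- Let α, β, b, c > 0 and ρ > σ > 0 be reals with ρ² > σ²ν², where ν = (c/b)·max{α/β, 1}; set δ = ρ² − σ²ν², A(s) = (1 − e^{−αs})/α, B(s) = (1 − e^{−βs})/β. Let T > 0, t* ∈ [0, T], ξ ∈ ℝ^n with ξ ≠ 0, and let v : [0, T] → ℝ^n be measurable with ∫₀^T ‖v(τ)‖² dτ ≤ σ² and ∫₀^{t*} max{0, δ b² A(T−τ)² + 2 c B(T−τ)⟨v(τ), ξ⟩} dτ = ‖ξ‖². Define u(τ) = (c B(T−τ)/(b A(T−τ)))·v(τ) − λ*(τ)·ξ for τ ∈ [0, t*] and u(τ) = (c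 B(T−τ)/(b A(T−τ)))·v(τ) for τ ∈ (t*, T], where λ*(τ) = max{0, δ b A(T−τ) + 2 (c B(T−τ)/(b A(T−τ)))⟨v(τ), ξ⟩}/‖ξ‖². Then (i) ξ + ∫₀^T (b A(T−τ)·u(τ) − c B(T−τ)·v(τ)) dτ = 0, and (ii) ∫₀^T ‖u(τ)‖² dτ ≤ ρ². -/
lemma stmt9_aux_exp (γ₁ γ₂ s : ℝ) (h1 : 0 < γ₁) (h12 : γ₁ ≤ γ₂) (hs : 0 ≤ s) :
    γ₁ * (1 - Real.exp (-γ₂ * s)) ≤ γ₂ * (1 - Real.exp (-γ₁ * s)) := by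
  set h : ℝ → ℝ := fun t => γ₁ * Real.exp (-γ₂ * t) - γ₂ * Real.exp (-γ₁ * t) with hh
  have hder : ∀ t : ℝ, HasDerivAt h
      (γ₁ * (Real.exp (-γ₂ * t) * (-γ₂)) - γ₂ * (Real.exp (-γ₁ * t) * (-γ₁))) t := by
    intro t
    have d2 : HasDerivAt (fun t : ℝ => Real.exp (-γ₂ * t)) (Real.exp (-γ₂ * t) * (-γ₂)) t := by
      simpa using (((hasDerivAt_id t).const_mul (-γ₂)).exp)
    have d1 : HasDerivAt (fun t : ℝ => Real.exp (-γ₁ * t)) (Real.exp (-γ₁ * t) * (-γ₁)) t := by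
      simpa using (((hasDerivAt_id t).const_mul (-γ₁)).exp)
    exact (d2.const_mul γ₁).sub (d1.const_mul γ₂)
  have hmono : MonotoneOn h (Set.Ici (0:ℝ)) := by
    apply monotoneOn_of_deriv_nonneg (convex_Ici 0)
    · exact fun t _ => ((hder t).continuousAt).continuousWithinAt
    · exact fun t _ => ((hder t).differentiableAt).differentiableWithinAt
    · intro t ht
      rw [interior_Ici] at ht
      rw [(hder t).deriv]
      have hexp : Real.exp (-γ₂ * t) ≤ Real.exp (-γ₁ * t) := by
        apply Real.exp_le_exp.2
        nlinarith [le_of_lt (Set.mem_Ioi.1 ht)]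
      nlinarith [mul_le_mul_of_nonneg_left hexp (mul_pos h1 (lt_of_lt_of_le h1 h12)).le]
  have := hmono (Set.self_mem_Ici) (Set.mem_Ici.2 hs) hs
  simp only [hh, mul_zero, Real.exp_zero, mul_one] at this
  nlinarith [this]

set_option maxHeartbeats 2000000 in
theorem stmt_9 (n : ℕ) (α β b c ρ σ : ℝ)
    (hα : 0 < α) (hβ : 0 < β) (hb : 0 < b) (hc : 0 < c)
    (hσ : 0 < σ) (hρσ : σ < ρ)
    (hν : ρ ^ 2 > σ ^ 2 * ((c / b) * max (α / β) 1) ^ 2)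
    (δ : ℝ) (hδ : δ = ρ ^ 2 - σ ^ 2 * ((c / b) * max (α / β) 1) ^ 2)
    (A B : ℝ → ℝ)
    (hA : ∀ s, A s = (1 - Real.exp (-α * s)) / α)
    (hB : ∀ s, B s = (1 - Real.exp (-β * s)) / β)
    (T : ℝ) (hT : 0 < T) (tstar : ℝ) (htstar : tstar ∈ Set.Icc (0 : ℝ) T)
    (ξ : EuclideanSpace ℝ (Fin n)) (hξ : ξ ≠ 0)
    (v : ℝ → EuclideanSpace ℝ (Fin n)) (hv : Measurable v)
    (hvint : (∫ τ in (0:ℝ)..T, ‖v τ‖ ^ 2) ≤ σ ^ 2)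
    (hroot : (∫ τ in (0:ℝ)..tstar,
        max 0 (δ * b ^ 2 * (A (T - τ)) ^ 2 +
          2 * c * B (T - τ) * (inner ℝ (v τ) ξ : ℝ))) = ‖ξ‖ ^ 2)
    (lamstar : ℝ → ℝ)
    (hlamstar : ∀ τ, lamstar τ =
      max 0 (δ * b * A (T - τ) +
        2 * (c * B (T - τ) / (b * A (T - τ))) * (inner ℝ (v τ) ξ : ℝ)) / ‖ξ‖ ^ 2)
    (u : ℝ → EuclideanSpace ℝ (Fin n))
    (hu : ∀ τ, u τ = if τ ≤ tstar then
        (c * B (T - τ) / (b * A (T - τ))) • v τ - lamstar τ • ξ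
      else (c * B (T - τ) / (b * A (T - τ))) • v τ) :
    ξ + (∫ τ in (0:ℝ)..T, ((b * A (T - τ)) • u τ - (c * B (T - τ)) • v τ)) = 0 ∧
    (∫ τ in (0:ℝ)..T, ‖u τ‖ ^ 2) ≤ ρ ^ 2 := by
  obtain ⟨hts0, htsT⟩ := htstar
  have hξn : ‖ξ‖ ≠ 0 := norm_ne_zero_iff.2 hξ
  have hξ2 : (0:ℝ) < ‖ξ‖ ^ 2 := pow_pos (norm_pos_iff.2 hξ) 2
  have hk : (0:ℝ) < min (α / β) 1 := lt_min (div_pos hα hβ) one_pos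
  have hK1 : (1:ℝ) ≤ max (α / β) 1 := le_max_right _ _
  -- basic facts about A and B
  have hA0 : A 0 = 0 := by rw [hA]; simp
  have hB0 : B 0 = 0 := by rw [hB]; simp
  have hApos : ∀ s : ℝ, 0 < s → 0 < A s := by
    intro s hs
    rw [hA]
    have h1 : Real.exp (-α * s) < 1 := by
      rw [Real.exp_lt_one_iff]; nlinarith
    exact div_pos (by linarith) hα
  have hBpos : ∀ s : ℝ, 0 < s → 0 < B s := by
    intro s hs
    rw [hB]
    have h1 : Real.exp (-β * s) < 1 := by
      rw [Real.exp_lt_one_iff]; nlinarith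
    exact div_pos (by linarith) hβ
  have hAnn : ∀ s : ℝ, 0 ≤ s → 0 ≤ A s := by
    intro s hs
    rcases hs.lt_or_eq with h | h
    · exact (hApos s h).le
    · rw [← h, hA0]
  have hBnn : ∀ s : ℝ, 0 ≤ s → 0 ≤ B s := by
    intro s hs
    rcases hs.lt_or_eq with h | h
    · exact (hBpos s h).le
    · rw [← h, hB0]
  have hBub : ∀ s : ℝ, 0 ≤ s → B s ≤ max (α / β) 1 * A s := by
    intro s hs
    rcases le_total α β with h | h
    · have haux := stmt9_aux_exp α β s hα h hs
      have hBA : B s ≤ A s := by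
        rw [hA, hB, div_le_div_iff₀ hβ hα]
        nlinarith
      have hAs := hAnn s hs
      nlinarith
    · have hmax : max (α / β) 1 = α / β := max_eq_left ((one_le_div hβ).2 h)
      rw [hmax, hA, hB]
      have hexp : Real.exp (-α * s) ≤ Real.exp (-β * s) := by
        apply Real.exp_le_exp.2; nlinarith
      have : α / β * ((1 - Real.exp (-α * s)) / α) = (1 - Real.exp (-α * s)) / β := by
        field_simp
      rw [this, div_le_div_iff_of_pos_right hβ]
      linarith
  have hBlb : ∀ s : ℝ, 0 ≤ s → min (α / β) 1 * A s ≤ B s := by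
    intro s hs
    rcases le_total α β with h | h
    · have hmin : min (α / β) 1 = α / β := min_eq_left ((div_le_one hβ).2 h)
      rw [hmin, hA, hB]
      have hexp : Real.exp (-β * s) ≤ Real.exp (-α * s) := by
        apply Real.exp_le_exp.2; nlinarith
      have : α / β * ((1 - Real.exp (-α * s)) / α) = (1 - Real.exp (-α * s)) / β := by
        field_simp
      rw [this, div_le_div_iff_of_pos_right hβ]
      linarith
    · have hmin : min (α / β) 1 = 1 := min_eq_right ((one_le_div hβ).2 h)
      rw [hmin, one_mul, hA, hB, div_le_div_iff₀ hα hβ]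
      have haux := stmt9_aux_exp β α s hβ h hs
      nlinarith
  -- nonnegativity and bound of W τ = c * B (T - τ) / (b * A (T - τ))
  have hW0 : ∀ τ : ℝ, τ ≤ T → 0 ≤ c * B (T - τ) / (b * A (T - τ)) := by
    intro τ hτ
    have h1 : 0 ≤ B (T - τ) := hBnn _ (by linarith)
    have h2 : 0 ≤ A (T - τ) := hAnn _ (by linarith)
    exact div_nonneg (mul_nonneg hc.le h1) (mul_nonneg hb.le h2)
  have hWle : ∀ τ : ℝ, τ ≤ T →
      c * B (T - τ) / (b * A (T - τ)) ≤ c / b * max (α / β) 1 := by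
    intro τ hτ
    rcases hτ.lt_or_eq with h | h
    · have ha : 0 < A (T - τ) := hApos _ (by linarith)
      rw [div_le_iff₀ (mul_pos hb ha)]
      have h1 := hBub (T - τ) (by linarith)
      have h2 : c / b * max (α / β) 1 * (b * A (T - τ)) = c * (max (α / β) 1 * A (T - τ)) := by
        field_simp
      rw [h2]
      nlinarith
    · rw [h, sub_self, hA0, hB0]
      simp only [mul_zero, zero_div, div_zero]
      exact mul_nonneg (div_nonneg hc.le hb.le) (le_trans zero_le_one hK1)
  have hAne : ∀ τ : ℝ, τ < T → b * A (T - τ) ≠ 0 := by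
    intro τ h
    exact (mul_pos hb (hApos _ (by linarith))).ne'
  have hmulW : ∀ τ : ℝ, τ ≤ T →
      (b * A (T - τ)) * (c * B (T - τ) / (b * A (T - τ))) = c * B (T - τ) := by
    intro τ hτ
    rcases hτ.lt_or_eq with h | h
    · rw [mul_comm]
      exact div_mul_cancel₀ _ (hAne τ h)
    · rw [h, sub_self, hA0, hB0]; ring
  -- F1
  have hF1 : ∀ τ : ℝ, τ ≤ T → b * A (T - τ) * lamstar τ =
      max 0 (δ * b ^ 2 * (A (T - τ)) ^ 2 +
        2 * c * B (T - τ) * (inner ℝ (v τ) ξ : ℝ)) / ‖ξ‖ ^ 2 := by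
    intro τ hτ
    rw [hlamstar]
    rcases hτ.lt_or_eq with h | h
    · have ha : 0 < A (T - τ) := hApos _ (by linarith)
      rw [← mul_div_assoc]
      congr 1
      rw [mul_max_of_nonneg _ _ (mul_pos hb ha).le, mul_zero]
      congr 1
      field_simp
    · rw [h, sub_self, hA0, hB0]
      simp
  -- F2
  have hF2 : ∀ τ : ℝ, τ ≤ T → (b * A (T - τ)) • u τ - (c * B (T - τ)) • v τ =
      if τ ≤ tstar then
        (-(max 0 (δ * b ^ 2 * (A (T - τ)) ^ 2 +
          2 * c * B (T - τ) * (inner ℝ (v τ) ξ : ℝ)) / ‖ξ‖ ^ 2)) • ξ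
      else (0 : EuclideanSpace ℝ (Fin n)) := by
    intro τ hτ
    rw [hu]
    by_cases hts : τ ≤ tstar
    · rw [if_pos hts, if_pos hts, smul_sub, smul_smul, smul_smul, hmulW τ hτ, hF1 τ hτ,
        neg_smul]
      abel
    · rw [if_neg hts, if_neg hts, smul_smul, hmulW τ hτ, sub_self]
  -- F3
  have hF3 : ∀ τ : ℝ, τ ≤ T → ‖u τ‖ ^ 2 =
      (c * B (T - τ) / (b * A (T - τ))) ^ 2 * ‖v τ‖ ^ 2 +
      (if τ ≤ tstar then
        δ * (max 0 (δ * b ^ 2 * (A (T - τ)) ^ 2 +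
          2 * c * B (T - τ) * (inner ℝ (v τ) ξ : ℝ)) / ‖ξ‖ ^ 2)
      else 0) := by
    intro τ hτ
    rw [hu]
    have hWnorm : ‖(c * B (T - τ) / (b * A (T - τ))) • v τ‖ ^ 2 =
        (c * B (T - τ) / (b * A (T - τ))) ^ 2 * ‖v τ‖ ^ 2 := by
      rw [norm_smul, mul_pow, Real.norm_eq_abs, sq_abs]
    by_cases hts : τ ≤ tstar
    · rw [if_pos hts, if_pos hts]
      rw [← hF1 τ hτ]
      have hns := norm_sub_sq_real ((c * B (T - τ) / (b * A (T - τ))) • v τ) (lamstar τ • ξ)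
      rw [hWnorm] at hns
      rw [norm_smul, mul_pow, Real.norm_eq_abs, sq_abs] at hns
      rw [real_inner_smul_left, real_inner_smul_right] at hns
      rw [hns]
      have hXl : lamstar τ * ‖ξ‖ ^ 2 = max 0 (δ * b * A (T - τ) +
          2 * (c * B (T - τ) / (b * A (T - τ))) * (inner ℝ (v τ) ξ : ℝ)) := by
        rw [hlamstar]
        exact div_mul_cancel₀ _ hξ2.ne'
      rcases le_total (δ * b * A (T - τ) +
          2 * (c * B (T - τ) / (b * A (T - τ))) * (inner ℝ (v τ) ξ : ℝ)) 0 with hX | hX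
      · have hmax0 : max 0 (δ * b * A (T - τ) +
            2 * (c * B (T - τ) / (b * A (T - τ))) * (inner ℝ (v τ) ξ : ℝ)) = 0 :=
          max_eq_left hX
        have hlam0 : lamstar τ = 0 := by
          rw [hlamstar, hmax0, zero_div]
        rw [hlam0]; ring
      · have hmaxX : max 0 (δ * b * A (T - τ) +
            2 * (c * B (T - τ) / (b * A (T - τ))) * (inner ℝ (v τ) ξ : ℝ)) =
            δ * b * A (T - τ) +
            2 * (c * B (T - τ) / (b * A (T - τ))) * (inner ℝ (v τ) ξ : ℝ) :=
          max_eq_right hX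
        rw [hmaxX] at hXl
        linear_combination lamstar τ * hXl
    · rw [if_neg hts, if_neg hts, hWnorm, add_zero]
  -- measurability
  have hAmeas : Measurable A := by
    have : A = fun s => (1 - Real.exp (-α * s)) / α := funext hA
    rw [this]; fun_prop
  have hBmeas : Measurable B := by
    have : B = fun s => (1 - Real.exp (-β * s)) / β := funext hB
    rw [this]; fun_prop
  have hipm : Measurable (fun τ => (inner ℝ (v τ) ξ : ℝ)) := hv.inner measurable_const
  have hmmeas : Measurable (fun τ => max 0 (δ * b ^ 2 * (A (T - τ)) ^ 2 +
      2 * c * B (T - τ) * (inner ℝ (v τ) ξ : ℝ))) := by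
    apply Measurable.max measurable_const
    apply Measurable.add
    · fun_prop
    · exact (measurable_const.mul (hBmeas.comp (measurable_const.sub measurable_id))).mul hipm
  -- integrability of m on [0, tstar]
  have hm_int : IntervalIntegrable (fun τ => max 0 (δ * b ^ 2 * (A (T - τ)) ^ 2 +
      2 * c * B (T - τ) * (inner ℝ (v τ) ξ : ℝ))) MeasureTheory.volume 0 tstar := by
    by_contra h
    rw [intervalIntegral.integral_undef h] at hroot
    exact hξ2.ne' hroot.symm
  -- Part (i)
  have hint1 : IntervalIntegrable
      (fun τ => (b * A (T - τ)) • u τ - (c * B (T - τ)) • v τ)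
      MeasureTheory.volume 0 tstar := by
    rw [intervalIntegrable_iff_integrableOn_Ioc_of_le hts0]
    have base : MeasureTheory.IntegrableOn
        (fun τ => (-(max 0 (δ * b ^ 2 * (A (T - τ)) ^ 2 +
          2 * c * B (T - τ) * (inner ℝ (v τ) ξ : ℝ)) / ‖ξ‖ ^ 2)) • ξ)
        (Set.Ioc 0 tstar) MeasureTheory.volume := by
      have h1 := ((hm_int.div_const (‖ξ‖ ^ 2)).neg)
      rw [intervalIntegrable_iff_integrableOn_Ioc_of_le hts0] at h1
      exact h1.smul_const ξ
    apply base.congr_fun ?_ measurableSet_Ioc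
    intro τ hτ
    exact ((hF2 τ (hτ.2.trans htsT)).trans (if_pos hτ.2)).symm
  have hint2 : IntervalIntegrable
      (fun τ => (b * A (T - τ)) • u τ - (c * B (T - τ)) • v τ)
      MeasureTheory.volume tstar T := by
    rw [intervalIntegrable_iff_integrableOn_Ioc_of_le htsT]
    apply (MeasureTheory.integrableOn_zero).congr_fun ?_ measurableSet_Ioc
    intro τ hτ
    exact ((hF2 τ hτ.2).trans (if_neg (not_le.2 hτ.1))).symm
  have key1 : (∫ τ in (0:ℝ)..tstar,
      ((b * A (T - τ)) • u τ - (c * B (T - τ)) • v τ)) = (-1 : ℝ) • ξ := by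
    rw [intervalIntegral.integral_of_le hts0]
    rw [MeasureTheory.setIntegral_congr_fun measurableSet_Ioc
      (g := fun τ => (-(max 0 (δ * b ^ 2 * (A (T - τ)) ^ 2 +
        2 * c * B (T - τ) * (inner ℝ (v τ) ξ : ℝ)) / ‖ξ‖ ^ 2)) • ξ)
      (fun τ hτ => (hF2 τ (hτ.2.trans htsT)).trans (if_pos hτ.2))]
    rw [integral_smul_const]
    congr 1
    rw [MeasureTheory.integral_neg, MeasureTheory.integral_div]
    rw [← intervalIntegral.integral_of_le hts0, hroot]
    field_simp
  have key2 : (∫ τ in tstar..T,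
      ((b * A (T - τ)) • u τ - (c * B (T - τ)) • v τ)) = 0 := by
    rw [intervalIntegral.integral_of_le htsT]
    rw [MeasureTheory.setIntegral_congr_fun measurableSet_Ioc
      (g := fun _ => (0 : EuclideanSpace ℝ (Fin n)))
      (fun τ hτ => (hF2 τ hτ.2).trans (if_neg (not_le.2 hτ.1)))]
    simp
  have hsplit := intervalIntegral.integral_add_adjacent_intervals hint1 hint2
  constructor
  · rw [← hsplit, key1, key2, add_zero]
    simp
  · -- Part (ii)
    by_cases hui : IntervalIntegrable (fun τ => ‖u τ‖ ^ 2) MeasureTheory.volume 0 T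
    swap
    · rw [intervalIntegral.integral_undef hui]
      positivity
    · have hψ1 : IntervalIntegrable (fun τ => if τ ≤ tstar then
          δ * (max 0 (δ * b ^ 2 * (A (T - τ)) ^ 2 +
            2 * c * B (T - τ) * (inner ℝ (v τ) ξ : ℝ)) / ‖ξ‖ ^ 2) else 0)
          MeasureTheory.volume 0 tstar := by
        rw [intervalIntegrable_iff_integrableOn_Ioc_of_le hts0]
        have h1 := (hm_int.div_const (‖ξ‖ ^ 2)).const_mul δ
        rw [intervalIntegrable_iff_integrableOn_Ioc_of_le hts0] at h1
        apply h1.congr_fun ?_ measurableSet_Ioc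
        intro τ hτ
        exact (if_pos hτ.2).symm
      have hψ2 : IntervalIntegrable (fun τ => if τ ≤ tstar then
          δ * (max 0 (δ * b ^ 2 * (A (T - τ)) ^ 2 +
            2 * c * B (T - τ) * (inner ℝ (v τ) ξ : ℝ)) / ‖ξ‖ ^ 2) else 0)
          MeasureTheory.volume tstar T := by
        rw [intervalIntegrable_iff_integrableOn_Ioc_of_le htsT]
        apply (MeasureTheory.integrableOn_zero).congr_fun ?_ measurableSet_Ioc
        intro τ hτ
        exact (if_neg (not_le.2 hτ.1)).symm
      have hψint := hψ1.trans hψ2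
      have hψval : (∫ τ in (0:ℝ)..T, (if τ ≤ tstar then
          δ * (max 0 (δ * b ^ 2 * (A (T - τ)) ^ 2 +
            2 * c * B (T - τ) * (inner ℝ (v τ) ξ : ℝ)) / ‖ξ‖ ^ 2) else 0)) = δ := by
        rw [← intervalIntegral.integral_add_adjacent_intervals hψ1 hψ2]
        have e1 : (∫ τ in (0:ℝ)..tstar, (if τ ≤ tstar then
            δ * (max 0 (δ * b ^ 2 * (A (T - τ)) ^ 2 +
            2 * c * B (T - τ) * (inner ℝ (v τ) ξ : ℝ)) / ‖ξ‖ ^ 2) else 0)) = δ := by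
          rw [intervalIntegral.integral_of_le hts0]
          rw [MeasureTheory.setIntegral_congr_fun measurableSet_Ioc
            (g := fun τ => δ * (max 0 (δ * b ^ 2 * (A (T - τ)) ^ 2 +
            2 * c * B (T - τ) * (inner ℝ (v τ) ξ : ℝ)) / ‖ξ‖ ^ 2))
            (fun τ hτ => if_pos hτ.2)]
          rw [MeasureTheory.integral_const_mul, MeasureTheory.integral_div]
          rw [← intervalIntegral.integral_of_le hts0, hroot]
          field_simp
        have e2 : (∫ τ in tstar..T, (if τ ≤ tstar then
            δ * (max 0 (δ * b ^ 2 * (A (T - τ)) ^ 2 +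
            2 * c * B (T - τ) * (inner ℝ (v τ) ξ : ℝ)) / ‖ξ‖ ^ 2) else 0)) = 0 := by
          rw [intervalIntegral.integral_of_le htsT]
          rw [MeasureTheory.setIntegral_congr_fun measurableSet_Ioc
            (g := fun _ => (0:ℝ))
            (fun τ hτ => if_neg (not_le.2 hτ.1))]
          simp
        rw [e1, e2, add_zero]
      have hφint : IntervalIntegrable (fun τ => (c * B (T - τ) / (b * A (T - τ))) ^ 2 * ‖v τ‖ ^ 2) MeasureTheory.volume 0 T := by
        have h1 := hui.sub hψint
        rw [intervalIntegrable_iff_integrableOn_Ioc_of_le hT.le] at h1 ⊢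
        apply h1.congr_fun ?_ measurableSet_Ioc
        intro τ hτ
        show ‖u τ‖ ^ 2 - _ = _
        rw [hF3 τ hτ.2]
        ring
      have hWlb : ∀ τ ∈ Set.Ioo (0:ℝ) T,
          c * min (α / β) 1 / b ≤ c * B (T - τ) / (b * A (T - τ)) := by
        intro τ hτ
        have hs : 0 < T - τ := by linarith [hτ.2]
        have ha := hApos _ hs
        rw [div_le_div_iff₀ hb (mul_pos hb ha)]
        have h1 := hBlb (T - τ) hs.le
        nlinarith [mul_le_mul_of_nonneg_left h1 (mul_pos hc hb).le]
      have hvint2 : IntervalIntegrable (fun τ => ‖v τ‖ ^ 2) MeasureTheory.volume 0 T := by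
        rw [intervalIntegrable_iff_integrableOn_Ioc_of_le hT.le]
        have hφIoo : MeasureTheory.IntegrableOn (fun τ => (c * B (T - τ) / (b * A (T - τ))) ^ 2 * ‖v τ‖ ^ 2)
            (Set.Ioo 0 T) MeasureTheory.volume := by
          have h1 := hφint
          rw [intervalIntegrable_iff_integrableOn_Ioc_of_le hT.le] at h1
          exact h1.mono_set Set.Ioo_subset_Ioc_self
        have hC : (0:ℝ) < (c * min (α / β) 1 / b) ^ 2 :=
          pow_pos (div_pos (mul_pos hc hk) hb) 2
        have hIoo : MeasureTheory.IntegrableOn (fun τ => ‖v τ‖ ^ 2)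
            (Set.Ioo 0 T) MeasureTheory.volume := by
          apply MeasureTheory.Integrable.mono'
            (hφIoo.const_mul (((c * min (α / β) 1 / b) ^ 2)⁻¹))
          · exact (hv.norm.pow_const 2).aestronglyMeasurable
          · rw [MeasureTheory.ae_restrict_iff' measurableSet_Ioo]
            apply MeasureTheory.ae_of_all
            intro τ hτ
            rw [Real.norm_eq_abs, abs_of_nonneg (by positivity)]
            rw [inv_mul_eq_div, le_div_iff₀ hC]
            have h1 := hWlb τ hτ
            have h2 : (c * min (α / β) 1 / b) ^ 2 ≤
                (c * B (T - τ) / (b * A (T - τ))) ^ 2 :=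
              pow_le_pow_left₀ (div_pos (mul_pos hc hk) hb).le h1 2
            nlinarith [mul_le_mul_of_nonneg_right h2 (sq_nonneg ‖v τ‖)]
        exact hIoo.congr_set_ae MeasureTheory.Ioo_ae_eq_Ioc.symm
      have hφle : (∫ τ in (0:ℝ)..T, (c * B (T - τ) / (b * A (T - τ))) ^ 2 * ‖v τ‖ ^ 2)
          ≤ (c / b * max (α / β) 1) ^ 2 * σ ^ 2 := by
        have step1 : (∫ τ in (0:ℝ)..T, (c * B (T - τ) / (b * A (T - τ))) ^ 2 * ‖v τ‖ ^ 2)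
            ≤ ∫ τ in (0:ℝ)..T, (c / b * max (α / β) 1) ^ 2 * ‖v τ‖ ^ 2 := by
          apply intervalIntegral.integral_mono_on hT.le hφint (hvint2.const_mul _)
          intro τ hτ
          apply mul_le_mul_of_nonneg_right ?_ (sq_nonneg ‖v τ‖)
          exact pow_le_pow_left₀ (hW0 τ hτ.2) (hWle τ hτ.2) 2
        have step2 : (∫ τ in (0:ℝ)..T, (c / b * max (α / β) 1) ^ 2 * ‖v τ‖ ^ 2)
            = (c / b * max (α / β) 1) ^ 2 * ∫ τ in (0:ℝ)..T, ‖v τ‖ ^ 2 :=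
          intervalIntegral.integral_const_mul _ _
        rw [step2] at step1
        exact step1.trans (mul_le_mul_of_nonneg_left hvint (sq_nonneg _))
      have huval : (∫ τ in (0:ℝ)..T, ‖u τ‖ ^ 2) =
          (∫ τ in (0:ℝ)..T, ((c * B (T - τ) / (b * A (T - τ))) ^ 2 * ‖v τ‖ ^ 2 +
            (if τ ≤ tstar then δ * (max 0 (δ * b ^ 2 * (A (T - τ)) ^ 2 +
            2 * c * B (T - τ) * (inner ℝ (v τ) ξ : ℝ)) / ‖ξ‖ ^ 2) else 0))) := by
        apply intervalIntegral.integral_congr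
        intro τ hτ
        rw [Set.uIcc_of_le hT.le] at hτ
        exact hF3 τ hτ.2
      rw [huval, intervalIntegral.integral_add hφint hψint, hψval]
      have hfin : (c / b * max (α / β) 1) ^ 2 * σ ^ 2 + δ = ρ ^ 2 := by rw [hδ]; ring
      linarith
end

section
/- Fix l ≥ 0, σ ≥ 0 and ρ > σ, and set δ = ρ² − σ². Fix z₀ ∈ ℝⁿ with ‖z₀‖ > l and set h = ‖z₀‖² − l² > 0. Then for every v ∈ ℝⁿ, { λ ∈ [0, ∞) : λ l + (‖v‖² + λδ)^{1/2} ≥ ‖v − λ·z₀‖ } = [0, max{0, λ*(v)}], where λ*(v) = (h(δ + 2⟨v, z₀⟩) + 2l²δ + 2l‖δ·z₀ + h·v‖)/h². -/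
set_option maxHeartbeats 1000000

lemma le_of_sq_le' (x y : ℝ) (hy : 0 ≤ y) (hxy : x^2 ≤ y^2) : x ≤ y := by
  nlinarith [sq_nonneg (x - y), sq_nonneg (x + y)]

lemma gap_lem (l δ h a b p w : ℝ) (hl : 0 ≤ l) (hδ : 0 < δ) (hb : l < b)
    (hh : h = b^2 - l^2) (ha : 0 ≤ a) (hp : -(a*b) ≤ p) (hw : 0 ≤ w)
    (hw2 : w^2 = δ^2*b^2 + 2*δ*h*p + h^2*a^2) (hneg : δ + 2*p < 0) :
    h*(δ+2*p) + 2*l^2*δ ≤ 2*l*w := by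
  have hhpos : 0 < h := by nlinarith
  rcases le_or_gt (h*(δ+2*p) + 2*l^2*δ) 0 with hC | hC
  · nlinarith
  · have hkey : -(δ + 2*p) ≤ 2*l*a := by
      by_contra hcon
      push_neg at hcon
      have hl0 : 0 < l := by
        rcases hl.lt_or_eq with h' | h'
        · exact h'
        · subst h'; nlinarith [mul_pos hhpos (neg_pos.2 hneg)]
      have h1 : h * a < l * δ := by nlinarith
      have h2 : δ < 2*a*(b-l) := by nlinarith
      have ha0 : 0 < a := by nlinarith
      nlinarith [mul_pos ha0 (sub_pos.2 hb)]
    have hq : 0 ≤ (2*l*a + (δ+2*p)) * (2*l*a - (δ+2*p)) := by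
      apply mul_nonneg <;> nlinarith [mul_nonneg hl ha]
    have hl2w2 : (2*l*w)^2 = 4*l^2*(δ^2*b^2 + 2*δ*h*p + h^2*a^2) := by
      rw [show (2*l*w)^2 = 4*l^2*w^2 by ring, hw2]
    refine le_of_sq_le' _ _ (by positivity) ?_
    rw [hl2w2]
    subst hh
    nlinarith [mul_nonneg (sq_nonneg (b^2 - l^2)) hq]

lemma key_lem (l δ h a b p w lam N s : ℝ) (hl : 0 ≤ l) (hδ : 0 < δ) (hb : l < b)
    (hh : h = b^2 - l^2) (ha : 0 ≤ a) (hp1 : -(a*b) ≤ p) (hp2 : p ≤ a*b)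
    (hw : 0 ≤ w) (hw2 : w^2 = δ^2*b^2 + 2*δ*h*p + h^2*a^2)
    (hN : 0 ≤ N) (hN2 : N^2 = a^2 - 2*lam*p + lam^2*b^2)
    (hs : 0 ≤ s) (hs2 : s^2 = a^2 + lam*δ) (hlam : 0 ≤ lam) :
    N ≤ lam*l + s ↔ lam ≤ max 0 ((h*(δ+2*p) + 2*l^2*δ + 2*l*w)/h^2) := by
  have hhpos : 0 < h := by nlinarith
  have hh2pos : 0 < h^2 := pow_pos hhpos 2
  have hs2' : 4*l^2*(a^2+lam*δ) = (2*l*s)^2 := by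
    rw [show (2*l*s)^2 = 4*l^2*s^2 by ring, hs2]
  constructor
  · intro hcond
    rcases hlam.lt_or_eq with hlam0 | hlam0
    swap
    · rw [← hlam0]; exact le_max_left 0 _
    have hsqcond : N^2 ≤ (lam*l + s)^2 := by
      have h0 : 0 ≤ lam*l + s := by positivity
      nlinarith
    have hA2 : lam*h - (δ+2*p) ≤ 2*l*s := by
      have hhl : lam^2*h = lam^2*b^2 - lam^2*l^2 := by rw [hh]; ring
      have hA : lam * (lam*h - (δ+2*p)) ≤ lam * (2*l*s) := by
        nlinarith [hN2, hs2, hsqcond, hhl]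
      exact le_of_mul_le_mul_left hA hlam0
    rcases le_or_gt (lam*h - (δ+2*p)) 0 with hAle | hAgt
    · have hstar : lam ≤ (h*(δ+2*p) + 2*l^2*δ + 2*l*w)/h^2 := by
        rw [le_div_iff₀ hh2pos]
        have hmul := mul_le_mul_of_nonneg_left (show lam*h ≤ δ+2*p by linarith) hhpos.le
        have e1 : 0 ≤ l*w := mul_nonneg hl hw
        have e2 : 0 ≤ l*l*δ := mul_nonneg (mul_nonneg hl hl) hδ.le
        nlinarith [hmul, e1, e2]
      exact le_trans hstar (le_max_right _ _)
    · have hA2sq : (lam*h - (δ+2*p))^2 ≤ 4*l^2*(a^2+lam*δ) := by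
        rw [hs2']
        nlinarith [mul_nonneg hl hs]
      have hup : lam*h^2 ≤ h*(δ+2*p)+2*l^2*δ+2*l*w := by
        have hid1 : (lam*h^2 - (h*(δ+2*p)+2*l^2*δ))^2
            = h^2*((lam*h-(δ+2*p))^2 - 4*l^2*(a^2+lam*δ)) + 4*l^2*w^2 := by
          rw [hw2, hh]; ring
        have hXA : 0 ≤ h^2*(4*l^2*(a^2+lam*δ) - (lam*h-(δ+2*p))^2) :=
          mul_nonneg (sq_nonneg h) (by linarith)
        have hDsq : (lam*h^2 - (h*(δ+2*p)+2*l^2*δ))^2 ≤ (2*l*w)^2 := by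
          nlinarith [hid1, hXA]
        have := le_of_sq_le' _ _ (by positivity : (0:ℝ) ≤ 2*l*w) hDsq
        linarith
      have hstar : lam ≤ (h*(δ+2*p) + 2*l^2*δ + 2*l*w)/h^2 := by
        rw [le_div_iff₀ hh2pos]; linarith
      exact le_trans hstar (le_max_right _ _)
  · intro hm
    rcases hlam.lt_or_eq with hlam0 | hlam0
    swap
    · subst hlam0
      have hNs : N ≤ s := le_of_sq_le' _ _ hs (by nlinarith [hN2, hs2])
      nlinarith [mul_nonneg hl hs]
    have hstar : lam ≤ (h*(δ+2*p) + 2*l^2*δ + 2*l*w)/h^2 := by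
      rcases le_or_gt ((h*(δ+2*p) + 2*l^2*δ + 2*l*w)/h^2) 0 with h' | h'
      · rw [max_eq_left h'] at hm; linarith
      · rwa [max_eq_right h'.le] at hm
    have hup : lam*h^2 ≤ h*(δ+2*p)+2*l^2*δ+2*l*w := by
      rwa [le_div_iff₀ hh2pos] at hstar
    have hA2 : lam*h - (δ+2*p) ≤ 2*l*s := by
      rcases le_or_gt (lam*h - (δ+2*p)) 0 with hAle | hAgt
      · nlinarith [mul_nonneg hl hs]
      · have hlow : -(2*l*w) ≤ lam*h^2 - (h*(δ+2*p)+2*l^2*δ) := by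
          rcases le_or_gt 0 (δ+2*p) with hdp | hdp
          · have hwid : w^2 - l^2*δ^2 = h*δ*(δ+2*p) + h^2*a^2 := by
              rw [hw2, hh]; ring
            have h1 : (l*δ)^2 ≤ w^2 := by
              nlinarith [mul_nonneg (mul_nonneg hhpos.le hδ.le) hdp, sq_nonneg (h*a)]
            have h2 : l*δ ≤ w := le_of_sq_le' _ _ hw h1
            nlinarith [mul_pos hhpos hAgt, mul_le_mul_of_nonneg_left h2 hl]
          · have hgap := gap_lem l δ h a b p w hl hδ hb hh ha hp1 hw hw2 hdp
            nlinarith [mul_pos hh2pos hlam0]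
        have hDsq : (lam*h^2 - (h*(δ+2*p)+2*l^2*δ))^2 ≤ 4*l^2*w^2 := by
          have h4 := sq_le_sq' hlow (by linarith : lam*h^2 - (h*(δ+2*p)+2*l^2*δ) ≤ 2*l*w)
          nlinarith [h4]
        have hAX : (lam*h-(δ+2*p))^2 ≤ 4*l^2*(a^2+lam*δ) := by
          have hid1 : (lam*h^2 - (h*(δ+2*p)+2*l^2*δ))^2
              = h^2*((lam*h-(δ+2*p))^2 - 4*l^2*(a^2+lam*δ)) + 4*l^2*w^2 := by
            rw [hw2, hh]; ring
          have h5 : h^2*((lam*h-(δ+2*p))^2 - 4*l^2*(a^2+lam*δ)) ≤ h^2 * 0 := by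
            rw [mul_zero]; linarith
          have h6 := le_of_mul_le_mul_left h5 hh2pos
          linarith
        rw [hs2'] at hAX
        have h7 : 0 ≤ 2*l*s := by positivity
        exact le_of_sq_le' _ _ h7 hAX
    have hrhs : 0 ≤ lam*l + s := by positivity
    have hhl : lam^2*h = lam^2*b^2 - lam^2*l^2 := by rw [hh]; ring
    have hAl := mul_le_mul_of_nonneg_left hA2 hlam
    have hsqq : N^2 ≤ (lam*l+s)^2 := by nlinarith [hN2, hs2, hAl, hhl]
    exact le_of_sq_le' _ _ hrhs hsqq

theorem stmt_10 (n : ℕ) (l σ ρ : ℝ) (hl : 0 ≤ l) (hσ : 0 ≤ σ) (hρσ : σ < ρ)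
    (δ : ℝ) (hδ : δ = ρ ^ 2 - σ ^ 2)
    (z₀ : EuclideanSpace ℝ (Fin n)) (hz₀ : l < ‖z₀‖)
    (h : ℝ) (hh : h = ‖z₀‖ ^ 2 - l ^ 2)
    (v : EuclideanSpace ℝ (Fin n)) :
    {lam : ℝ | 0 ≤ lam ∧ ‖v - lam • z₀‖ ≤ lam * l + Real.sqrt (‖v‖ ^ 2 + lam * δ)} =
      Set.Icc 0 (max 0
        ((h * (δ + 2 * (inner ℝ v z₀ : ℝ)) + 2 * l ^ 2 * δ +
          2 * l * ‖δ • z₀ + h • v‖) / h ^ 2)) := by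
  have hρ0 : 0 < ρ := lt_of_le_of_lt hσ hρσ
  have hδ' : 0 < δ := by rw [hδ]; nlinarith
  have hpabs := abs_real_inner_le_norm v z₀
  have hp1 : -(‖v‖ * ‖z₀‖) ≤ (inner ℝ v z₀ : ℝ) := (abs_le.1 hpabs).1
  have hp2 : (inner ℝ v z₀ : ℝ) ≤ ‖v‖ * ‖z₀‖ := (abs_le.1 hpabs).2
  have hw2 : ‖δ • z₀ + h • v‖^2
      = δ^2*‖z₀‖^2 + 2*δ*h*(inner ℝ v z₀ : ℝ) + h^2*‖v‖^2 := by
    rw [norm_add_sq_real, real_inner_smul_left, real_inner_smul_right,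
      norm_smul, norm_smul, mul_pow, mul_pow, Real.norm_eq_abs, Real.norm_eq_abs,
      sq_abs, sq_abs, real_inner_comm z₀ v]
    ring
  ext lam
  simp only [Set.mem_setOf_eq, Set.mem_Icc]
  constructor
  · rintro ⟨h1, h2⟩
    refine ⟨h1, ?_⟩
    have hN2 : ‖v - lam • z₀‖^2
        = ‖v‖^2 - 2*lam*(inner ℝ v z₀ : ℝ) + lam^2*‖z₀‖^2 := by
      rw [norm_sub_sq_real, real_inner_smul_right, norm_smul, mul_pow,
        Real.norm_eq_abs, sq_abs]
      ring
    have hs2 : (Real.sqrt (‖v‖^2 + lam*δ))^2 = ‖v‖^2 + lam*δ :=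
      Real.sq_sqrt (by nlinarith [mul_nonneg h1 hδ'.le, sq_nonneg ‖v‖])
    have := (key_lem l δ h ‖v‖ ‖z₀‖ (inner ℝ v z₀ : ℝ) ‖δ • z₀ + h • v‖ lam
      ‖v - lam • z₀‖ (Real.sqrt (‖v‖^2 + lam*δ)) hl hδ' hz₀ hh (norm_nonneg v)
      hp1 hp2 (norm_nonneg _) hw2 (norm_nonneg _) hN2 (Real.sqrt_nonneg _) hs2 h1).1 h2
    convert this using 2
  · rintro ⟨h1, h2⟩
    refine ⟨h1, ?_⟩
    have hN2 : ‖v - lam • z₀‖^2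
        = ‖v‖^2 - 2*lam*(inner ℝ v z₀ : ℝ) + lam^2*‖z₀‖^2 := by
      rw [norm_sub_sq_real, real_inner_smul_right, norm_smul, mul_pow,
        Real.norm_eq_abs, sq_abs]
      ring
    have hs2 : (Real.sqrt (‖v‖^2 + lam*δ))^2 = ‖v‖^2 + lam*δ :=
      Real.sq_sqrt (by nlinarith [mul_nonneg h1 hδ'.le, sq_nonneg ‖v‖])
    refine (key_lem l δ h ‖v‖ ‖z₀‖ (inner ℝ v z₀ : ℝ) ‖δ • z₀ + h • v‖ lam
      ‖v - lam • z₀‖ (Real.sqrt (‖v‖^2 + lam*δ)) hl hδ' hz₀ hh (norm_nonneg v)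
      hp1 hp2 (norm_nonneg _) hw2 (norm_nonneg _) hN2 (Real.sqrt_nonneg _) hs2 h1).2 ?_
    convert h2 using 2
end

section
/- Fix l ≥ 0, σ ≥ 0 and ρ > σ, and set δ = ρ² − σ². Fix z₀ ∈ ℝⁿ with ‖z₀‖ > l and set h = ‖z₀‖² − l² > 0. For v ∈ ℝⁿ let λ*(v) = (h(δ + 2⟨v, z₀⟩) + 2l²δ + 2l‖δ·z₀ + h·v‖)/h² and λ(v) = max{0, λ*(v)}. Then for every v ∈ ℝⁿ: λ(v) > 0 if and only if δ + 2⟨v, z₀⟩ + 2l‖v‖ > 0. -/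
set_option maxHeartbeats 1000000 in
theorem stmt_11 (n : ℕ) (l σ ρ : ℝ) (hl : 0 ≤ l) (hσ : 0 ≤ σ) (hρσ : σ < ρ)
    (δ : ℝ) (hδ : δ = ρ ^ 2 - σ ^ 2)
    (z₀ : EuclideanSpace ℝ (Fin n)) (hz₀ : l < ‖z₀‖)
    (h : ℝ) (hh : h = ‖z₀‖ ^ 2 - l ^ 2)
    (v : EuclideanSpace ℝ (Fin n)) :
    0 < max 0 ((h * (δ + 2 * (inner ℝ v z₀ : ℝ)) + 2 * l ^ 2 * δ +
        2 * l * ‖δ • z₀ + h • v‖) / h ^ 2) ↔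
      0 < δ + 2 * (inner ℝ v z₀ : ℝ) + 2 * l * ‖v‖ := by
  have hδ0 : 0 < δ := by nlinarith
  have hh0 : 0 < h := by nlinarith [norm_nonneg z₀]
  set a : ℝ := (inner ℝ v z₀ : ℝ) with ha
  set w := δ • z₀ + h • v with hw
  have hCS : -a ≤ ‖v‖ * ‖z₀‖ := by
    have h1 : |a| ≤ ‖v‖ * ‖z₀‖ := abs_real_inner_le_norm v z₀
    linarith [neg_abs_le a]
  have hc : (inner ℝ z₀ v : ℝ) = a := by rw [ha, real_inner_comm]
  have hnormw : ‖w‖ ^ 2 = δ^2*‖z₀‖^2 + 2*δ*h*a + h^2*‖v‖^2 := by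
    rw [hw, norm_add_sq_real, real_inner_smul_left, real_inner_smul_right, hc,
      norm_smul, norm_smul, Real.norm_eq_abs, Real.norm_eq_abs, mul_pow, mul_pow,
      sq_abs, sq_abs]
    ring
  have key : (h*(δ+2*a)+2*l^2*δ)^2 - 4*l^2*‖w‖^2
      = h^2*((δ+2*a)^2 - 4*l^2*‖v‖^2) := by
    have hz2 : ‖z₀‖^2 = h + l^2 := by rw [hh]; ring
    rw [hnormw, hz2]; ring
  have hwnn : 0 ≤ ‖w‖ := norm_nonneg w
  have hvnn : 0 ≤ ‖v‖ := norm_nonneg v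
  have hlv0 : 0 ≤ l * ‖v‖ := mul_nonneg hl hvnn
  have hlw0 : 0 ≤ l * ‖w‖ := mul_nonneg hl hwnn
  rw [lt_max_iff]
  simp only [lt_self_iff_false, false_or]
  rw [lt_div_iff₀ (by positivity : (0:ℝ) < h^2), zero_mul]
  constructor
  · intro hN
    by_contra hS
    push_neg at hS
    have hAN : h*(δ+2*a)+2*l^2*δ ≤ 0 := by
      by_contra hAN
      push_neg at hAN
      nlinarith [mul_nonneg hvnn (sq_nonneg (‖z₀‖ - l)),
        mul_nonneg hl (mul_nonneg hvnn hvnn), mul_pos hh0 hδ0,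
        mul_nonneg (mul_nonneg hl hvnn) (sub_nonneg.mpr hz₀.le)]
    have h1 : 4*l^2*‖v‖^2 ≤ (δ+2*a)^2 := by
      have p1 : δ + 2*a ≤ -(2*l*‖v‖) := by linarith
      nlinarith [mul_nonneg (by linarith : (0:ℝ) ≤ -(δ+2*a) - 2*l*‖v‖)
        (by linarith : (0:ℝ) ≤ -(δ+2*a) + 2*l*‖v‖)]
    have h2 : 4*l^2*‖w‖^2 ≤ (h*(δ+2*a)+2*l^2*δ)^2 := by
      linarith [key, mul_nonneg (sq_nonneg h)
        (by linarith : (0:ℝ) ≤ (δ+2*a)^2 - 4*l^2*‖v‖^2)]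
    have h3 : 0 < 2*l*‖w‖ - (h*(δ+2*a)+2*l^2*δ) := by linarith
    have h4 := mul_pos hN h3
    have h5 : (h*(δ+2*a)+2*l^2*δ + 2*l*‖w‖) * (2*l*‖w‖ - (h*(δ+2*a)+2*l^2*δ))
        = 4*l^2*‖w‖^2 - (h*(δ+2*a)+2*l^2*δ)^2 := by ring
    rw [h5] at h4
    linarith
  · intro hS
    rcases le_or_gt (δ + 2*a) 0 with hA | hA
    · have p1 : 0 < 2*l*‖v‖ + (δ+2*a) := by linarith
      have p2 : 0 < 2*l*‖v‖ - (δ+2*a) := by linarith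
      have hlv : (δ+2*a)^2 < 4*l^2*‖v‖^2 := by nlinarith [mul_pos p1 p2]
      have h2 : (h*(δ+2*a)+2*l^2*δ)^2 < 4*l^2*‖w‖^2 := by
        linarith [key, mul_pos (by positivity : (0:ℝ) < h^2)
          (by linarith : (0:ℝ) < 4*l^2*‖v‖^2 - (δ+2*a)^2)]
      by_contra hg
      push_neg at hg
      have q1 : (0:ℝ) ≤ -(h*(δ+2*a)+2*l^2*δ) - 2*l*‖w‖ := by linarith
      have q2 : (0:ℝ) ≤ -(h*(δ+2*a)+2*l^2*δ) + 2*l*‖w‖ := by linarith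
      have h4 := mul_nonneg q1 q2
      have h5 : (-(h*(δ+2*a)+2*l^2*δ) - 2*l*‖w‖) * (-(h*(δ+2*a)+2*l^2*δ) + 2*l*‖w‖)
          = (h*(δ+2*a)+2*l^2*δ)^2 - 4*l^2*‖w‖^2 := by ring
      rw [h5] at h4
      linarith
    · nlinarith [mul_pos hh0 hA, mul_nonneg (mul_nonneg hl hl) hδ0.le]
end

section
/- Fix l ≥ 0, σ ≥ 0 and ρ > σ, and set δ = ρ² − σ². Fix z₀ ∈ ℝⁿ with ‖z₀‖ > l and set h = ‖z₀‖² − l² > 0. For v ∈ ℝⁿ let λ*(v) = (h(δ + 2⟨v, z₀⟩) + 2l²δ + 2l‖δ·z₀ + h·v‖)/h². Then for every v ∈ ℝⁿ with λ*(v) > 0, one has the identity λ*(v)·l + (‖v‖² + λ*(v)·δ)^{1/2} = ‖v − λ*(v)·z₀‖. -/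
theorem stmt_12 (n : ℕ) (l σ ρ : ℝ) (hl : 0 ≤ l) (hσ : 0 ≤ σ) (hρσ : σ < ρ)
    (δ : ℝ) (hδ : δ = ρ ^ 2 - σ ^ 2)
    (z₀ : EuclideanSpace ℝ (Fin n)) (hz₀ : l < ‖z₀‖)
    (h : ℝ) (hh : h = ‖z₀‖ ^ 2 - l ^ 2)
    (v : EuclideanSpace ℝ (Fin n))
    (lamstar : ℝ)
    (hlamstar : lamstar = (h * (δ + 2 * (inner ℝ v z₀ : ℝ)) + 2 * l ^ 2 * δ +
        2 * l * ‖δ • z₀ + h • v‖) / h ^ 2)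
    (hpos : 0 < lamstar) :
    lamstar * l + Real.sqrt (‖v‖ ^ 2 + lamstar * δ) = ‖v - lamstar • z₀‖ := by
  have hδ0 : 0 < δ := by nlinarith
  have hh0 : 0 < h := by nlinarith
  set ip : ℝ := inner ℝ v z₀ with hip
  set N : ℝ := ‖δ • z₀ + h • v‖ with hN
  have hN0 : 0 ≤ N := norm_nonneg _
  have hNsq : N ^ 2 = δ ^ 2 * ‖z₀‖ ^ 2 + 2 * δ * h * ip + h ^ 2 * ‖v‖ ^ 2 := by
    have hcomm : (inner ℝ z₀ v : ℝ) = ip := by rw [hip, real_inner_comm]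
    rw [hN, norm_add_sq_real, norm_smul, norm_smul, real_inner_smul_left,
      real_inner_smul_right, hcomm]
    simp only [Real.norm_eq_abs, abs_of_pos hδ0, abs_of_pos hh0]
    ring
  have hlam' : lamstar * h ^ 2 = h * (δ + 2 * ip) + 2 * l ^ 2 * δ + 2 * l * N := by
    rw [hlamstar]; field_simp
  have hkey : ‖v‖ ^ 2 + lamstar * δ = ((l * δ + N) / h) ^ 2 := by
    rw [div_pow, eq_div_iff (by positivity)]
    nlinarith [hNsq, hlam', hh]
  have hsqrt : Real.sqrt (‖v‖ ^ 2 + lamstar * δ) = (l * δ + N) / h := by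
    rw [hkey, Real.sqrt_sq (by positivity)]
  rw [hsqrt]
  have hMsq : ‖v - lamstar • z₀‖ ^ 2 = ‖v‖ ^ 2 - 2 * lamstar * ip + lamstar ^ 2 * ‖z₀‖ ^ 2 := by
    rw [norm_sub_sq_real, real_inner_smul_right, norm_smul, ← hip]
    simp only [Real.norm_eq_abs, mul_pow, sq_abs]; ring
  have hS0 : 0 ≤ lamstar * l + (l * δ + N) / h := by positivity
  have hsq : (lamstar * l + (l * δ + N) / h) ^ 2 = ‖v - lamstar • z₀‖ ^ 2 := by
    rw [hMsq]
    have hexp : ((l * δ + N) / h) ^ 2 = ‖v‖ ^ 2 + lamstar * δ := hkey.symm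
    field_simp at hexp ⊢
    linear_combination hexp - lamstar * h * hlam' + lamstar ^ 2 * h ^ 2 * hh
  calc lamstar * l + (l * δ + N) / h
      = Real.sqrt ((lamstar * l + (l * δ + N) / h) ^ 2) := (Real.sqrt_sq hS0).symm
    _ = Real.sqrt (‖v - lamstar • z₀‖ ^ 2) := by rw [hsq]
    _ = ‖v - lamstar • z₀‖ := Real.sqrt_sq (norm_nonneg _)
end

section
/- Fix l ≥ 0, σ ≥ 0 and ρ > σ, and set δ = ρ² − σ². Fix z₀ ∈ ℝⁿ with ‖z₀‖ > l and set h = ‖z₀‖² − l² > 0. For v ∈ ℝⁿ let λ(v) = max{0, (h(δ + 2⟨v, z₀⟩) + 2l²δ + 2l‖δ·z₀ + h·v‖)/h²}. Suppose v ∈ ℝⁿ satisfies v ≠ λ(v)·z₀, and define m(v) = −l·(v − λ(v)·z₀)/‖v − λ(v)·z₀‖ and u(v) = v + λ(v)·(m(v) − z₀). Then ‖u(v)‖² = ‖v‖² + δ·λ(v). -/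
theorem stmt_13 (n : ℕ) (l σ ρ : ℝ) (hl : 0 ≤ l) (hσ : 0 ≤ σ) (hρσ : σ < ρ)
    (δ : ℝ) (hδ : δ = ρ ^ 2 - σ ^ 2)
    (z₀ : EuclideanSpace ℝ (Fin n)) (hz₀ : l < ‖z₀‖)
    (h : ℝ) (hh : h = ‖z₀‖ ^ 2 - l ^ 2)
    (lam : EuclideanSpace ℝ (Fin n) → ℝ)
    (hlam : ∀ v, lam v = max 0 ((h * (δ + 2 * (inner ℝ v z₀ : ℝ)) + 2 * l ^ 2 * δ +
        2 * l * ‖δ • z₀ + h • v‖) / h ^ 2))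
    (v : EuclideanSpace ℝ (Fin n)) (hv : v ≠ lam v • z₀)
    (m u : EuclideanSpace ℝ (Fin n))
    (hm : m = -((l / ‖v - lam v • z₀‖) • (v - lam v • z₀)))
    (hu : u = v + lam v • (m - z₀)) :
    ‖u‖ ^ 2 = ‖v‖ ^ 2 + δ * lam v := by
  have hznn : (0:ℝ) ≤ ‖z₀‖ := norm_nonneg _
  have hpos : 0 < h := by nlinarith
  have hne : h ≠ 0 := ne_of_gt hpos
  have hlv := hlam v
  obtain ⟨A, hA⟩ : ∃ a : ℝ, (inner ℝ v z₀ : ℝ) = a := ⟨_, rfl⟩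
  obtain ⟨N, hN⟩ : ∃ x : ℝ, ‖δ • z₀ + h • v‖ = x := ⟨_, rfl⟩
  obtain ⟨Z, hZ⟩ : ∃ x : ℝ, ‖z₀‖ = x := ⟨_, rfl⟩
  obtain ⟨V, hV⟩ : ∃ x : ℝ, ‖v‖ = x := ⟨_, rfl⟩
  rw [hA, hN] at hlv
  rw [hZ] at hznn hh
  have hNnn : (0:ℝ) ≤ N := hN ▸ norm_nonneg _
  rcases le_or_gt ((h * (δ + 2 * A) + 2 * l ^ 2 * δ + 2 * l * N) / h ^ 2) 0 with hX | hX
  · have hL0 : lam v = 0 := by rw [hlv]; exact max_eq_left hX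
    rw [hu, hL0]
    simp
  · have hLeq : lam v = (h * (δ + 2 * A) + 2 * l ^ 2 * δ + 2 * l * N) / h ^ 2 := by
      rw [hlv]; exact max_eq_right hX.le
    obtain ⟨L, hLd⟩ : ∃ x : ℝ, lam v = x := ⟨_, rfl⟩
    rw [hLd] at hLeq hm hu ⊢
    have hL2 : h ^ 2 * L = h * (δ + 2 * A) + 2 * l ^ 2 * δ + 2 * l * N := by
      rw [hLeq]; field_simp
    obtain ⟨r, hrd⟩ : ∃ x : ℝ, ‖v - L • z₀‖ = x := ⟨_, rfl⟩
    rw [hrd] at hm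
    have hrpos : 0 < r := by
      rw [← hrd]
      exact norm_pos_iff.mpr (sub_ne_zero.mpr (hLd ▸ hv))
    have hr2 : r ^ 2 = V ^ 2 - 2 * L * A + L ^ 2 * Z ^ 2 := by
      rw [← hrd, norm_sub_sq_real, real_inner_smul_right, norm_smul, hA, hV, hZ,
        Real.norm_eq_abs, mul_pow, sq_abs]
      ring
    have hN2 : N ^ 2 = δ ^ 2 * Z ^ 2 + 2 * (δ * h) * A + h ^ 2 * V ^ 2 := by
      rw [← hN, norm_add_sq_real, real_inner_smul_left, real_inner_smul_right,
        real_inner_comm v z₀, norm_smul, norm_smul, hA, hV, hZ,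
        Real.norm_eq_abs, Real.norm_eq_abs, mul_pow, mul_pow, sq_abs, sq_abs]
      ring
    have hC : -(N * Z) ≤ δ * Z ^ 2 + h * A := by
      have h1 := neg_abs_le (inner ℝ (δ • z₀ + h • v) z₀ : ℝ)
      have h2 : (inner ℝ (δ • z₀ + h • v) z₀ : ℝ) = δ * Z ^ 2 + h * A := by
        rw [inner_add_left, real_inner_smul_left, real_inner_smul_left,
          real_inner_self_eq_norm_sq, hA, hZ]
      have h3 := abs_real_inner_le_norm (δ • z₀ + h • v) z₀
      rw [h2] at h1
      rw [h2, hN, hZ] at h3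
      nlinarith [h1, h3]
    have h2S : h ^ 2 * (L * (h + 2 * l ^ 2) - δ - 2 * A) =
        4 * l ^ 2 * (δ * Z ^ 2 + h * A) + 2 * l * N * (h + 2 * l ^ 2) := by
      linear_combination (h + 2 * l ^ 2) * hL2 + 4 * l ^ 2 * δ * hh
    have hSnn : 0 ≤ L * (h + 2 * l ^ 2) - δ - 2 * A := by
      have e : h ^ 2 * (L * (h + 2 * l ^ 2) - δ - 2 * A) =
          4 * l ^ 2 * (δ * Z ^ 2 + h * A + N * Z) + 2 * l * N * (Z - l) ^ 2 := by
        set_option maxHeartbeats 800000 in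
        linear_combination h2S + 2 * l * N * hh
      have t1 : (0:ℝ) ≤ 4 * l ^ 2 * (δ * Z ^ 2 + h * A + N * Z) :=
        mul_nonneg (by positivity) (by linarith)
      have t2 : (0:ℝ) ≤ 2 * l * N * (Z - l) ^ 2 := by positivity
      have h5 : 0 ≤ h ^ 2 * (L * (h + 2 * l ^ 2) - δ - 2 * A) := by linarith
      exact nonneg_of_mul_nonneg_right h5 (pow_pos hpos 2)
    have h4 : h ^ 2 * ((L * (h + 2 * l ^ 2) - δ - 2 * A) ^ 2) =
        h ^ 2 * ((2 * l * r) ^ 2) := by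
      set_option maxHeartbeats 1600000 in
      linear_combination (h ^ 2 * L - h * (δ + 2 * A) - 2 * l ^ 2 * δ + 2 * l * N) * hL2
        + 4 * l ^ 2 * hN2 - 4 * l ^ 2 * h ^ 2 * hr2
        + 4 * l ^ 2 * (h ^ 2 * L ^ 2 - δ ^ 2) * hh
    have hkey : (L * (h + 2 * l ^ 2) - δ - 2 * A) ^ 2 = (2 * l * r) ^ 2 :=
      mul_left_cancel₀ (pow_ne_zero 2 hne) h4
    have h2lr : 2 * l * r = L * (h + 2 * l ^ 2) - δ - 2 * A :=
      (sq_eq_sq₀ (by positivity) hSnn).mp hkey.symm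
    have hwu : u = (1 - L * l / r) • (v - L • z₀) := by
      rw [hu, hm]
      match_scalars <;> ring
    have hu2 : ‖u‖ ^ 2 = (1 - L * l / r) ^ 2 * r ^ 2 := by
      rw [hwu, norm_smul, hrd, Real.norm_eq_abs, mul_pow, sq_abs]
    have hexp : (1 - L * l / r) ^ 2 * r ^ 2 =
        r ^ 2 - (2 * l * r) * L + L ^ 2 * l ^ 2 := by
      field_simp
      ring
    rw [hu2, hexp, hV]
    linear_combination hr2 - L * h2lr - L ^ 2 * hh
end

section
/- Fix l ≥ 0, σ ≥ 0 and ρ > σ, and set δ = ρ² − σ². Fix z₀ ∈ ℝⁿ with ‖z₀‖ > l and set h = ‖z₀‖² − l² > 0. For v ∈ ℝⁿ let λ(v) = max{0, (h(δ + 2⟨v, z₀⟩) + 2l²δ + 2l‖δ·z₀ + h·v‖)/h²}, and for v with v ≠ λ(v)·z₀ let m(v) = −l·(v − λ(v)·z₀)/‖v − λ(v)·z₀‖. Let T > 0 and let v : [0, T] → ℝⁿ be measurable with ∫₀^T ‖v(τ)‖² dτ ≤ σ², v(τ) ≠ λ(v(τ))·z₀ for a.e. τ, and ∫₀^T λ(v(τ))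 dτ = 1. Then ‖z₀ + ∫₀^T λ(v(τ))·(m(v(τ)) − z₀) dτ‖ ≤ l. -/
open MeasureTheory

theorem stmt_16 (n : ℕ) (l σ ρ : ℝ) (hl : 0 ≤ l) (hσ : 0 ≤ σ) (hρσ : σ < ρ)
    (δ : ℝ) (hδ : δ = ρ ^ 2 - σ ^ 2)
    (z₀ : EuclideanSpace ℝ (Fin n)) (hz₀ : l < ‖z₀‖)
    (h : ℝ) (hh : h = ‖z₀‖ ^ 2 - l ^ 2)
    (lam : EuclideanSpace ℝ (Fin n) → ℝ)
    (hlam : ∀ v, lam v = max 0 ((h * (δ + 2 * (inner ℝ v z₀ : ℝ)) + 2 * l ^ 2 * δ +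
        2 * l * ‖δ • z₀ + h • v‖) / h ^ 2))
    (m : EuclideanSpace ℝ (Fin n) → EuclideanSpace ℝ (Fin n))
    (hm : ∀ v, v ≠ lam v • z₀ →
      m v = -((l / ‖v - lam v • z₀‖) • (v - lam v • z₀)))
    (T : ℝ) (hT : 0 < T)
    (v : ℝ → EuclideanSpace ℝ (Fin n)) (hv : Measurable v)
    (hvint : (∫ τ in (0:ℝ)..T, ‖v τ‖ ^ 2) ≤ σ ^ 2)
    (hvae : ∀ᵐ τ ∂(volume.restrict (Set.Icc (0 : ℝ) T)), v τ ≠ lam (v τ) • z₀)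
    (hcap : (∫ τ in (0:ℝ)..T, lam (v τ)) = 1) :
    ‖z₀ + ∫ τ in (0:ℝ)..T, lam (v τ) • (m (v τ) - z₀)‖ ≤ l := by
  have hT' : (0:ℝ) ≤ T := hT.le
  have hlam_nonneg : ∀ u, 0 ≤ lam u := fun u => by rw [hlam u]; exact le_max_left _ _
  have hnorm_m : ∀ u, u ≠ lam u • z₀ → ‖m u‖ = l := by
    intro u hu
    have hw : u - lam u • z₀ ≠ 0 := sub_ne_zero.mpr hu
    have hwn : ‖u - lam u • z₀‖ ≠ 0 := norm_ne_zero_iff.mpr hw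
    rw [hm u hu, norm_neg, norm_smul, Real.norm_eq_abs, abs_div, abs_of_nonneg hl,
      abs_of_nonneg (norm_nonneg _)]
    field_simp
  -- measurability of lam ∘ v
  have hfmeas : Measurable (fun τ => lam (v τ)) := by
    have : (fun τ => lam (v τ)) = fun τ =>
        max 0 ((h * (δ + 2 * (inner ℝ (v τ) z₀ : ℝ)) + 2 * l ^ 2 * δ +
          2 * l * ‖δ • z₀ + h • v τ‖) / h ^ 2) := funext fun τ => hlam (v τ)
    rw [this]
    have hinner : Measurable (fun τ => (inner ℝ (v τ) z₀ : ℝ)) :=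
      ((continuous_inner.comp (continuous_id.prodMk continuous_const)).measurable).comp hv
    have hnorm : Measurable (fun τ => ‖δ • z₀ + h • v τ‖) :=
      (measurable_const.add (hv.const_smul h)).norm
    exact measurable_const.max
      ((((measurable_const.mul (measurable_const.add (hinner.const_mul 2))).add
        measurable_const).add (hnorm.const_mul (2 * l))).div_const _)
  have hfint : IntervalIntegrable (fun τ => lam (v τ)) volume 0 T := by
    by_contra hc
    rw [intervalIntegral.integral_undef hc] at hcap
    exact zero_ne_one hcap
  have hfint' : IntegrableOn (fun τ => lam (v τ)) (Set.Ioc 0 T) volume :=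
    (intervalIntegrable_iff_integrableOn_Ioc_of_le hT').mp hfint
  have hvae' : ∀ᵐ τ ∂(volume.restrict (Set.Ioc (0:ℝ) T)), v τ ≠ lam (v τ) • z₀ :=
    ae_restrict_of_ae_restrict_of_subset Set.Ioc_subset_Icc_self hvae
  set g₁ : ℝ → EuclideanSpace ℝ (Fin n) := fun τ => lam (v τ) • m (v τ) with hg₁
  -- explicit measurable version of g₁
  have hMmeas : Measurable (fun τ =>
      lam (v τ) • (-((l / ‖v τ - lam (v τ) • z₀‖) • (v τ - lam (v τ) • z₀)))) := by
    have hw : Measurable (fun τ => v τ - lam (v τ) • z₀) :=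
      hv.sub (hfmeas.smul_const z₀)
    have hwn : Measurable (fun τ => l / ‖v τ - lam (v τ) • z₀‖) :=
      measurable_const.div hw.norm
    exact hfmeas.smul (hwn.smul hw).neg
  have hg₁ae : g₁ =ᵐ[volume.restrict (Set.Ioc (0:ℝ) T)] (fun τ =>
      lam (v τ) • (-((l / ‖v τ - lam (v τ) • z₀‖) • (v τ - lam (v τ) • z₀)))) := by
    filter_upwards [hvae'] with τ hτ
    rw [hg₁]
    simp only [hm (v τ) hτ]
  have hg₁sm : AEStronglyMeasurable g₁ (volume.restrict (Set.Ioc (0:ℝ) T)) :=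
    hMmeas.aestronglyMeasurable.congr hg₁ae.symm
  have hg₁norm : ∀ᵐ τ ∂(volume.restrict (Set.Ioc (0:ℝ) T)), ‖g₁ τ‖ = lam (v τ) * l := by
    filter_upwards [hvae'] with τ hτ
    rw [hg₁]
    simp only [norm_smul, Real.norm_eq_abs, abs_of_nonneg (hlam_nonneg _), hnorm_m (v τ) hτ]
  have hg₁int : IntegrableOn g₁ (Set.Ioc 0 T) volume := by
    refine Integrable.mono' (hfint'.mul_const l) hg₁sm ?_
    filter_upwards [hg₁norm] with τ hτ
    rw [hτ]
  have hg₁int' : IntervalIntegrable g₁ volume 0 T :=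
    (intervalIntegrable_iff_integrableOn_Ioc_of_le hT').mpr hg₁int
  have hg₂int : IntervalIntegrable (fun τ => lam (v τ) • z₀) volume 0 T :=
    (intervalIntegrable_iff_integrableOn_Ioc_of_le hT').mpr (hfint'.smul_const z₀)
  -- split the integral
  have hsplit : (∫ τ in (0:ℝ)..T, lam (v τ) • (m (v τ) - z₀))
      = (∫ τ in (0:ℝ)..T, g₁ τ) - (∫ τ in (0:ℝ)..T, lam (v τ) • z₀) := by
    rw [← intervalIntegral.integral_sub hg₁int' hg₂int]
    apply intervalIntegral.integral_congr
    intro τ _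
    simp [hg₁, smul_sub]
  have hz : (∫ τ in (0:ℝ)..T, lam (v τ) • z₀) = z₀ := by
    rw [intervalIntegral.integral_smul_const, hcap, one_smul]
  rw [hsplit, hz]
  have : z₀ + ((∫ τ in (0:ℝ)..T, g₁ τ) - z₀) = ∫ τ in (0:ℝ)..T, g₁ τ := by abel
  rw [this]
  calc ‖∫ τ in (0:ℝ)..T, g₁ τ‖ ≤ ∫ τ in (0:ℝ)..T, ‖g₁ τ‖ :=
        intervalIntegral.norm_integral_le_integral_norm hT'
    _ = ∫ τ in (0:ℝ)..T, lam (v τ) * l := by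
        apply intervalIntegral.integral_congr_ae
        rw [Set.uIoc_of_le hT']
        exact (ae_restrict_iff' measurableSet_Ioc).mp hg₁norm
    _ = l := by rw [intervalIntegral.integral_mul_const, hcap, one_mul]
end

section
/- Fix l ≥ 0, σ ≥ 0 and ρ > σ, and set δ = ρ² − σ². Fix z₀ ∈ ℝⁿ with ‖z₀‖ > l and set h = ‖z₀‖² − l² > 0. For v ∈ ℝⁿ let λ(v) = max{0, (h(δ + 2⟨v, z₀⟩) + 2l²δ + 2l‖δ·z₀ + h·v‖)/h²}, and for v with v ≠ λ(v)·z₀ let m(v) = −l·(v − λ(v)·z₀)/‖v − λ(v)·z₀‖ and u(v) = v + λ(v)·(m(v) − z₀). Let T > 0 and let v : [0, T] → ℝⁿ be measurable with ∫₀^T ‖v(τ)‖² dτ ≤ σ², v(τ) ≠ λ(v(τ))·z₀ for a.e. τ, and ∫₀^T λ(v(τ)) dτ = 1. Then ∫₀^T ‖u(v(τ))‖² dτ ≤ ρ². -/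
open MeasureTheory

set_option maxHeartbeats 1000000

private lemma key_id (l δ h s V B P lam : ℝ) (hh : h ≠ 0)
    (e1 : P ^ 2 = V - 2 * lam * s + lam ^ 2 * (h + l ^ 2))
    (e2 : B ^ 2 = δ ^ 2 * (h + l ^ 2) + 2 * δ * h * s + h ^ 2 * V)
    (e3 : h ^ 2 * lam = h * (δ + 2 * s) + 2 * l ^ 2 * δ + 2 * l * B) :
    (lam * (h + 2 * l ^ 2) - (δ + 2 * s)) ^ 2 = 4 * l ^ 2 * P ^ 2 := by
  have h4 : h ^ 4 ≠ 0 := pow_ne_zero _ hh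
  have key4 : h ^ 4 * ((lam * (h + 2 * l ^ 2) - (δ + 2 * s)) ^ 2) =
      h ^ 4 * (4 * l ^ 2 * P ^ 2) := by
    linear_combination (-(4 * l ^ 2) * h ^ 4) * e1 + (4 * l ^ 2 * h ^ 2) * e2 +
      (h ^ 4 * lam + h ^ 2 * (2 * l ^ 2 * δ + 2 * l * B + 8 * l ^ 2 * s -
        (δ + 2 * s) * (h + 4 * l ^ 2))) * e3
  exact mul_left_cancel₀ h4 key4

private lemma alg_main (l δ h s V B P lam K : ℝ)
    (hl : 0 ≤ l) (hδ : 0 < δ) (hhp : 0 < h)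
    (hV : 0 ≤ V) (hB : 0 ≤ B) (hP : 0 < P) (hlam : 0 ≤ lam)
    (e1 : P ^ 2 = V - 2 * lam * s + lam ^ 2 * (h + l ^ 2))
    (e2 : B ^ 2 = δ ^ 2 * (h + l ^ 2) + 2 * δ * h * s + h ^ 2 * V)
    (e3 : h ^ 2 * lam = h * (δ + 2 * s) + 2 * l ^ 2 * δ + 2 * l * B)
    (cs : (δ * (h + l ^ 2) + h * s) ^ 2 ≤ B ^ 2 * (h + l ^ 2))
    (hK : K = (4 * l ^ 2 * (2 * δ * (h + l ^ 2) * (h + 2 * l ^ 2) ^ 2) ^ 2 +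
      2 * δ * (h + 2 * l ^ 2) ^ 2 * h ^ 2 * (2 * δ * (h + l ^ 2) * (h + 2 * l ^ 2) ^ 2)) /
      ((h + 2 * l ^ 2) ^ 2 * h ^ 6)) :
    (P - lam * l) ^ 2 ≤ V + δ * lam ∧ V ≤ (P - lam * l) ^ 2 + K := by
  have hhl2 : 0 < h + l ^ 2 := by nlinarith [sq_nonneg l]
  have hh2l2 : 0 < h + 2 * l ^ 2 := by nlinarith [sq_nonneg l]
  set S' : ℝ := 2 * δ * (h + l ^ 2) * (h + 2 * l ^ 2) ^ 2 with hS'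
  have hS'pos : 0 < S' :=
    mul_pos (mul_pos (by linarith : (0:ℝ) < 2 * δ) hhl2) (pow_pos hh2l2 2)
  have hKnn : 0 ≤ K := by
    rw [hK]
    apply div_nonneg _ (by positivity)
    have t1 : 0 ≤ 4 * l ^ 2 * S' ^ 2 := by positivity
    have t2 : 0 ≤ 2 * δ * (h + 2 * l ^ 2) ^ 2 * h ^ 2 * S' :=
      mul_nonneg (mul_nonneg (mul_nonneg (by linarith : (0:ℝ) ≤ 2 * δ)
        (sq_nonneg _)) (sq_nonneg h)) hS'pos.le
    linarith
  have key := key_id l δ h s V B P lam hhp.ne' e1 e2 e3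
  have hfac : (lam * (h + 2 * l ^ 2) - (δ + 2 * s) - 2 * l * P) *
      (lam * (h + 2 * l ^ 2) - (δ + 2 * s) + 2 * l * P) = 0 := by linear_combination key
  rcases mul_eq_zero.mp hfac with hD | hD
  · have heq : (P - lam * l) ^ 2 = V + δ * lam := by linear_combination e1 + lam * hD
    exact ⟨heq.le, by linarith [heq, mul_nonneg hδ.le hlam]⟩
  · have h4 : (P - lam * l) ^ 2 = V + δ * lam - 4 * (lam * l * P) := by
      linear_combination e1 + lam * hD
    have hub : (P - lam * l) ^ 2 ≤ V + δ * lam := by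
      linarith [h4, mul_nonneg (mul_nonneg hlam hl) hP.le]
    refine ⟨hub, ?_⟩
    rcases eq_or_lt_of_le hl with hl0 | hlpos
    · have heq : (P - lam * l) ^ 2 = V + δ * lam := by
        linear_combination e1 + lam * hD + (4 * lam * P) * hl0
      linarith [heq, mul_nonneg hδ.le hlam]
    · -- l > 0 : bound V by K
      have h2l : (2 * l) ≠ 0 := by positivity
      have R2 : (2 * l) * (l * h * (δ + 2 * s) + l * δ * (h + 2 * l ^ 2) + B * (h + 2 * l ^ 2)) =
          (2 * l) * (-(h ^ 2 * P)) := by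
        linear_combination (-(h + 2 * l ^ 2)) * e3 + h ^ 2 * hD
      have R := mul_left_cancel₀ h2l R2
      have st1 : B * (h + 2 * l ^ 2) ≤ 2 * l * h * (-s) := by
        linarith [R, mul_nonneg (sq_nonneg h) hP.le, mul_nonneg (mul_nonneg hl hhp.le) hδ.le,
          mul_nonneg (mul_nonneg hl hδ.le) hh2l2.le]
      have st0 : 0 ≤ -s := by
        nlinarith [st1, mul_nonneg hB hh2l2.le, mul_pos hlpos hhp]
      have sq1 : (B * (h + 2 * l ^ 2)) ^ 2 ≤ (2 * l * h * (-s)) ^ 2 :=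
        pow_le_pow_left₀ (mul_nonneg hB hh2l2.le) st1 2
      have X1 : 0 ≤ (B ^ 2 * (h + l ^ 2) - (δ * (h + l ^ 2) + h * s) ^ 2) * (h + 2 * l ^ 2) ^ 2 :=
        mul_nonneg (by linarith) (sq_nonneg _)
      have X2 : 0 ≤ ((2 * l * h * (-s)) ^ 2 - (B * (h + 2 * l ^ 2)) ^ 2) * (h + l ^ 2) :=
        mul_nonneg (by linarith) hhl2.le
      have q' : h ^ 4 * s ^ 2 ≤ h * (2 * δ * (h + l ^ 2) * (h + 2 * l ^ 2) ^ 2) * (-s) := by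
        nlinarith [X1, X2, sq_nonneg (δ * (h + l ^ 2) * (h + 2 * l ^ 2))]
      have q : h ^ 4 * s ^ 2 ≤ h * S' * (-s) := by rw [hS']; exact q'
      have st2 : h ^ 3 * (-s) ≤ S' := by
        rcases eq_or_lt_of_le st0 with h0 | h0
        · rw [← h0, mul_zero]; exact hS'pos.le
        · nlinarith [q, mul_pos hhp h0]
      have st3 : B * (h + 2 * l ^ 2) * h ^ 3 ≤ 2 * l * h * S' := by
        have t1 : B * (h + 2 * l ^ 2) * h ^ 3 ≤ 2 * l * h * (-s) * h ^ 3 :=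
          mul_le_mul_of_nonneg_right st1 (by positivity)
        have t2 : 2 * l * h * (h ^ 3 * (-s)) ≤ 2 * l * h * S' :=
          mul_le_mul_of_nonneg_left st2 (by positivity)
        nlinarith [t1, t2]
      have st4 : h ^ 2 * V ≤ B ^ 2 + 2 * δ * h * (-s) := by
        linarith [e2, mul_nonneg (sq_nonneg δ) hhl2.le]
      have sq3 : (B * (h + 2 * l ^ 2) * h ^ 3) ^ 2 ≤ (2 * l * h * S') ^ 2 :=
        pow_le_pow_left₀ (by positivity) st3 2
      have hVK : V ≤ K := by
        rw [hK, le_div_iff₀ (by positivity)]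
        have Y1 : h ^ 2 * V * ((h + 2 * l ^ 2) ^ 2 * h ^ 6) ≤
            (B ^ 2 + 2 * δ * h * (-s)) * ((h + 2 * l ^ 2) ^ 2 * h ^ 6) :=
          mul_le_mul_of_nonneg_right st4 (by positivity)
        have Y2 : 2 * δ * h ^ 4 * (h + 2 * l ^ 2) ^ 2 * (h ^ 3 * (-s)) ≤
            2 * δ * h ^ 4 * (h + 2 * l ^ 2) ^ 2 * S' :=
          mul_le_mul_of_nonneg_left st2 (by positivity)
        have P8 : V * ((h + 2 * l ^ 2) ^ 2 * h ^ 6) * h ^ 2 ≤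
            (4 * l ^ 2 * S' ^ 2 + 2 * δ * (h + 2 * l ^ 2) ^ 2 * h ^ 2 * S') * h ^ 2 := by
          linarith [Y1, Y2, sq3]
        exact le_of_mul_le_mul_right P8 (pow_pos hhp 2)
      linarith [hVK, sq_nonneg (P - lam * l)]

theorem stmt_17 (n : ℕ) (l σ ρ : ℝ) (hl : 0 ≤ l) (hσ : 0 ≤ σ) (hρσ : σ < ρ)
    (δ : ℝ) (hδ : δ = ρ ^ 2 - σ ^ 2)
    (z₀ : EuclideanSpace ℝ (Fin n)) (hz₀ : l < ‖z₀‖)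
    (h : ℝ) (hh : h = ‖z₀‖ ^ 2 - l ^ 2)
    (lam : EuclideanSpace ℝ (Fin n) → ℝ)
    (hlam : ∀ v, lam v = max 0 ((h * (δ + 2 * (inner ℝ v z₀ : ℝ)) + 2 * l ^ 2 * δ +
        2 * l * ‖δ • z₀ + h • v‖) / h ^ 2))
    (m u : EuclideanSpace ℝ (Fin n) → EuclideanSpace ℝ (Fin n))
    (hm : ∀ v, v ≠ lam v • z₀ →
      m v = -((l / ‖v - lam v • z₀‖) • (v - lam v • z₀)))
    (hu : ∀ v, u v = v + lam v • (m v - z₀))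
    (T : ℝ) (hT : 0 < T)
    (v : ℝ → EuclideanSpace ℝ (Fin n)) (hv : Measurable v)
    (hvint : (∫ τ in (0:ℝ)..T, ‖v τ‖ ^ 2) ≤ σ ^ 2)
    (hvae : ∀ᵐ τ ∂(volume.restrict (Set.Icc (0 : ℝ) T)), v τ ≠ lam (v τ) • z₀)
    (hcap : (∫ τ in (0:ℝ)..T, lam (v τ)) = 1) :
    (∫ τ in (0:ℝ)..T, ‖u (v τ)‖ ^ 2) ≤ ρ ^ 2 := by
  have hδpos : 0 < δ := by nlinarith
  have hhpos : 0 < h := by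
    rw [hh]
    nlinarith [hz₀, hl]
  have hZ : ‖z₀‖ ^ 2 = h + l ^ 2 := by rw [hh]; ring
  set K : ℝ := (4 * l ^ 2 * (2 * δ * (h + l ^ 2) * (h + 2 * l ^ 2) ^ 2) ^ 2 +
      2 * δ * (h + 2 * l ^ 2) ^ 2 * h ^ 2 * (2 * δ * (h + l ^ 2) * (h + 2 * l ^ 2) ^ 2)) /
      ((h + 2 * l ^ 2) ^ 2 * h ^ 6) with hKdef
  -- pointwise bounds
  have point : ∀ w : EuclideanSpace ℝ (Fin n), w ≠ lam w • z₀ →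
      ‖u w‖ ^ 2 ≤ ‖w‖ ^ 2 + δ * lam w ∧ ‖w‖ ^ 2 ≤ ‖u w‖ ^ 2 + K := by
    intro w hne
    have hKnn : 0 ≤ K := by
      rw [hKdef]
      apply div_nonneg _ (by positivity)
      have hhl2 : 0 < h + l ^ 2 := by nlinarith [sq_nonneg l]
      have hh2l2 : 0 < h + 2 * l ^ 2 := by nlinarith [sq_nonneg l]
      nlinarith [sq_nonneg (l * (2 * δ * (h + l ^ 2) * (h + 2 * l ^ 2) ^ 2)),
        mul_nonneg (mul_nonneg (mul_nonneg (by linarith : (0:ℝ) ≤ 2 * δ)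
          (sq_nonneg (h + 2 * l ^ 2))) (sq_nonneg h))
          (mul_nonneg (mul_nonneg (by linarith : (0:ℝ) ≤ 2 * δ) hhl2.le)
            (sq_nonneg (h + 2 * l ^ 2)))]
    set s : ℝ := (inner ℝ w z₀ : ℝ) with hs
    have e2 : ‖δ • z₀ + h • w‖ ^ 2 = δ ^ 2 * (h + l ^ 2) + 2 * δ * h * s + h ^ 2 * ‖w‖ ^ 2 := by
      rw [norm_add_sq_real]
      simp only [norm_smul, real_inner_smul_left, real_inner_smul_right,
        Real.norm_eq_abs, mul_pow, sq_abs]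
      rw [real_inner_comm w z₀, hZ, ← hs]
      ring
    rcases le_total ((h * (δ + 2 * s) + 2 * l ^ 2 * δ + 2 * l * ‖δ • z₀ + h • w‖) / h ^ 2) 0
      with hX | hX
    · have hlam0 : lam w = 0 := by rw [hlam w]; exact max_eq_left hX
      have huw : u w = w := by rw [hu w, hlam0, zero_smul, add_zero]
      rw [huw, hlam0]
      constructor
      · nlinarith
      · linarith
    · have hlamX : lam w = (h * (δ + 2 * s) + 2 * l ^ 2 * δ + 2 * l * ‖δ • z₀ + h • w‖) / h ^ 2 := by
        rw [hlam w]; exact max_eq_right hX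
      have hlw0 : 0 ≤ lam w := hlamX ▸ hX
      have e3 : h ^ 2 * lam w = h * (δ + 2 * s) + 2 * l ^ 2 * δ + 2 * l * ‖δ • z₀ + h • w‖ := by
        rw [hlamX]
        field_simp
      have hpne : w - lam w • z₀ ≠ 0 := sub_ne_zero.mpr hne
      have hPpos : 0 < ‖w - lam w • z₀‖ := norm_pos_iff.mpr hpne
      have e1 : ‖w - lam w • z₀‖ ^ 2 = ‖w‖ ^ 2 - 2 * lam w * s + lam w ^ 2 * (h + l ^ 2) := by
        rw [norm_sub_sq_real]
        simp only [norm_smul, real_inner_smul_right, Real.norm_eq_abs, mul_pow, sq_abs]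
        rw [hZ, ← hs]
        ring
      have huval : ‖u w‖ ^ 2 = (‖w - lam w • z₀‖ - lam w * l) ^ 2 := by
        have hform : u w = ((‖w - lam w • z₀‖ - lam w * l) / ‖w - lam w • z₀‖) • (w - lam w • z₀) := by
          rw [hu w, hm w hne]
          match_scalars <;> field_simp <;> ring
        rw [hform, norm_smul, Real.norm_eq_abs, mul_pow, sq_abs, div_pow,
          div_mul_cancel₀ _ (pow_ne_zero 2 hPpos.ne')]
      have cs : (δ * (h + l ^ 2) + h * s) ^ 2 ≤ ‖δ • z₀ + h • w‖ ^ 2 * (h + l ^ 2) := by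
        have hin : (inner ℝ (δ • z₀ + h • w) z₀ : ℝ) = δ * (h + l ^ 2) + h * s := by
          rw [inner_add_left]
          simp only [real_inner_smul_left, real_inner_self_eq_norm_sq]
          rw [hZ, ← hs]
        have habs := abs_real_inner_le_norm (δ • z₀ + h • w) z₀
        rw [hin] at habs
        have h2 : |δ * (h + l ^ 2) + h * s| ^ 2 ≤ (‖δ • z₀ + h • w‖ * ‖z₀‖) ^ 2 :=
          pow_le_pow_left₀ (abs_nonneg _) habs 2
        rw [sq_abs, mul_pow, hZ] at h2
        exact h2
      have := alg_main l δ h s (‖w‖ ^ 2) (‖δ • z₀ + h • w‖) (‖w - lam w • z₀‖) (lam w) K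
        hl hδpos hhpos (sq_nonneg _) (norm_nonneg _) hPpos hlw0 e1 e2 e3 cs hKdef
      rw [huval]
      exact this
  -- integral part
  have hlamae : ∀ᵐ τ ∂(volume.restrict (Set.Ioc (0:ℝ) T)), v τ ≠ lam (v τ) • z₀ :=
    ae_restrict_of_ae_restrict_of_subset Set.Ioc_subset_Icc_self hvae
  have hlint : IntervalIntegrable (fun τ => lam (v τ)) volume 0 T := by
    by_contra hni
    rw [intervalIntegral.integral_undef hni] at hcap
    exact one_ne_zero hcap.symm
  by_cases hui : IntervalIntegrable (fun τ => ‖u (v τ)‖ ^ 2) volume 0 T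
  · have hub : ∀ᵐ τ ∂(volume.restrict (Set.Ioc (0:ℝ) T)),
        ‖u (v τ)‖ ^ 2 ≤ ‖v τ‖ ^ 2 + δ * lam (v τ) := hlamae.mono fun τ hτ => (point _ hτ).1
    have hlb : ∀ᵐ τ ∂(volume.restrict (Set.Ioc (0:ℝ) T)),
        ‖v τ‖ ^ 2 ≤ ‖u (v τ)‖ ^ 2 + K := hlamae.mono fun τ hτ => (point _ hτ).2
    have hvmeas : AEStronglyMeasurable (fun τ => ‖v τ‖ ^ 2)
        (volume.restrict (Set.Ioc (0:ℝ) T)) :=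
      (hv.norm.pow_const 2).aestronglyMeasurable
    have hgint : IntegrableOn (fun τ => ‖u (v τ)‖ ^ 2 + K) (Set.Ioc (0:ℝ) T) :=
      hui.1.add (integrableOn_const measure_Ioc_lt_top.ne)
    have hvInt : IntegrableOn (fun τ => ‖v τ‖ ^ 2) (Set.Ioc (0:ℝ) T) := by
      refine Integrable.mono' hgint hvmeas ?_
      refine hlb.mono fun τ hτ => ?_
      rw [Real.norm_eq_abs, abs_of_nonneg (sq_nonneg _)]
      exact hτ
    have hsum : IntegrableOn (fun τ => ‖v τ‖ ^ 2 + δ * lam (v τ)) (Set.Ioc (0:ℝ) T) :=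
      hvInt.add (hlint.1.const_mul δ)
    rw [intervalIntegral.integral_of_le hT.le] at hvint hcap ⊢
    have step1 : (∫ τ in Set.Ioc (0:ℝ) T, ‖u (v τ)‖ ^ 2) ≤
        ∫ τ in Set.Ioc (0:ℝ) T, (‖v τ‖ ^ 2 + δ * lam (v τ)) :=
      integral_mono_ae hui.1 hsum hub
    rw [MeasureTheory.integral_add hvInt (hlint.1.const_mul δ),
      MeasureTheory.integral_const_mul, hcap] at step1
    nlinarith [step1, hvint]
  · rw [intervalIntegral.integral_undef hui]
    positivity
end
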